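/- arXiv:1312.5505 — 8 statements merged into one kernel-verified Lean document; each statement's English description precedes it below -/
import Mathlib

section
/- Let P1 and P2 be two parallel classes of a resolvable transversal design TD(q-1,q). Then there is at most one block of P2 all of whose points are covered by the union of some q-1 blocks of P1. -/
/-- A transversal design TD(ℓ,h): points `α`, `ℓ` groups of size `h`, blocks of size `ℓ`
meeting each group in exactly one point, every pair of points from different groups in
exactly one block. -/
structure TD (α : Type) [DecidableEq α] [Fintype α] (ℓ h : ℕ) where
  groups : Finset (Finset α)
  blocks : Finset (Finset α)
  card_points : Fintype.card α = ℓ * h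
  groups_card : groups.card = ℓ
  group_size : ∀ G ∈ groups, G.card = h
  groups_partition : ∀ x : α, ∃! G, G ∈ groups ∧ x ∈ G
  block_size : ∀ B ∈ blocks, B.card = ℓ
  block_meets_group : ∀ B ∈ blocks, ∀ G ∈ groups, (B ∩ G).card = 1
  pair_unique : ∀ x y : α, x ≠ y → (∀ G ∈ groups, ¬(x ∈ G ∧ y ∈ G)) →
    ∃! B, B ∈ blocks ∧ x ∈ B ∧ y ∈ B

/-- A resolvable transversal design: the blocks are partitioned into `h` parallel
classes of `h` pairwise disjoint blocks, each class covering every point exactly once. -/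
structure RTD (α : Type) [DecidableEq α] [Fintype α] (ℓ h : ℕ) extends TD α ℓ h where
  classes : Finset (Finset (Finset α))
  classes_card : classes.card = h
  class_sub : ∀ C ∈ classes, C ⊆ blocks
  class_card : ∀ C ∈ classes, C.card = h
  class_cover : ∀ C ∈ classes, ∀ x : α, ∃! B, B ∈ C ∧ x ∈ B
  block_class : ∀ B ∈ blocks, ∃! C, C ∈ classes ∧ B ∈ C

/-- In a resolvable TD(q-1,q), for two distinct parallel classes P1, P2
and any q-1 blocks of P1, at most one block of P2 is covered by their union. -/
theorem stmt_2 {α : Type} [DecidableEq α] [Fintype α] (q : ℕ) (hq : 3 ≤ q)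
    (D : RTD α (q - 1) q)
    (P1 P2 : Finset (Finset α)) (h1 : P1 ∈ D.classes) (h2 : P2 ∈ D.classes)
    (hne : P1 ≠ P2)
    (S : Finset (Finset α)) (hS : S ⊆ P1) (hScard : S.card = q - 1) :
    (P2.filter (fun B => B ⊆ S.biUnion id)).card ≤ 1 := by
  rw [Finset.card_le_one]
  intro B hB B' hB'
  simp only [Finset.mem_filter] at hB hB'
  obtain ⟨hBP2, hBsub⟩ := hB
  obtain ⟨hB'P2, hB'sub⟩ := hB'
  by_contra hBB'
  -- there is a block B0 of P1 not in S
  have hP1card : P1.card = q := D.class_card P1 h1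
  have hSsub : S ⊂ P1 := by
    refine hS.ssubset_of_ne ?_
    intro h; rw [h, hP1card] at hScard; omega
  obtain ⟨B0, hB0P1, hB0S⟩ := Finset.exists_of_ssubset hSsub
  have hB0blk : B0 ∈ D.blocks := D.class_sub P1 h1 hB0P1
  have hB0card : B0.card = q - 1 := D.block_size B0 hB0blk
  -- the union of S is disjoint from B0
  have hdisj : ∀ T : Finset α, T ⊆ S.biUnion id → ∀ x ∈ T, x ∉ B0 := by
    intro T hT x hx hxB0
    obtain ⟨A, hAS, hxA⟩ := Finset.mem_biUnion.mp (hT hx)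
    have := (D.class_cover P1 h1 x).unique ⟨hS hAS, hxA⟩ ⟨hB0P1, hxB0⟩
    exact hB0S (this ▸ hAS)
  -- map each point of B0 to the block of P2 containing it
  have hcov := D.class_cover P2 h2
  set f : α → Finset α := fun x => (hcov x).choose with hf
  have hfspec : ∀ x : α, f x ∈ P2 ∧ x ∈ f x := fun x => (hcov x).choose_spec.1
  have hmaps : ∀ x ∈ B0, f x ∈ P2 \ {B, B'} := by
    intro x hx
    rw [Finset.mem_sdiff]
    refine ⟨(hfspec x).1, ?_⟩
    simp only [Finset.mem_insert, Finset.mem_singleton]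
    rintro (h | h)
    · exact hdisj B hBsub x (h ▸ (hfspec x).2) hx
    · exact hdisj B' hB'sub x (h ▸ (hfspec x).2) hx
  have hcard2 : (P2 \ {B, B'}).card = q - 2 := by
    rw [Finset.card_sdiff_of_subset]
    · rw [D.class_card P2 h2, Finset.card_insert_of_notMem (by simpa using hBB'),
        Finset.card_singleton]
    · intro x hx
      simp only [Finset.mem_insert, Finset.mem_singleton] at hx
      rcases hx with h | h <;> subst h <;> assumption
  have hlt : (P2 \ {B, B'}).card < B0.card := by omega
  obtain ⟨x, hx, y, hy, hxy, hfxy⟩ :=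
    Finset.exists_ne_map_eq_of_card_lt_of_maps_to hlt hmaps
  -- x, y are not in a common group
  have hgrp : ∀ G ∈ D.groups, ¬(x ∈ G ∧ y ∈ G) := by
    rintro G hG ⟨hxG, hyG⟩
    have hsub : ({x, y} : Finset α) ⊆ B0 ∩ G := by
      intro z hz
      simp only [Finset.mem_insert, Finset.mem_singleton] at hz
      rcases hz with h | h <;> subst h <;> exact Finset.mem_inter.mpr ⟨by assumption, by assumption⟩
    have h2le : 2 ≤ (B0 ∩ G).card := by
      calc 2 = ({x, y} : Finset α).card := (Finset.card_pair hxy).symm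
        _ ≤ (B0 ∩ G).card := Finset.card_le_card hsub
    rw [D.block_meets_group B0 hB0blk G hG] at h2le
    omega
  -- the common block of x and y is unique, so B0 = f x
  have hfxblk : f x ∈ D.blocks := D.class_sub P2 h2 (hfspec x).1
  have huniq := D.pair_unique x y hxy hgrp
  have hB0eq : B0 = f x :=
    (huniq.unique ⟨hB0blk, hx, hy⟩ ⟨hfxblk, (hfspec x).2, hfxy ▸ (hfspec y).2⟩)
  -- then B0 ∈ P1 ∩ P2, contradicting uniqueness of classes
  have : P1 = P2 :=
    (D.block_class B0 hB0blk).unique ⟨h1, hB0P1⟩ ⟨h2, hB0eq ▸ (hfspec x).1⟩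
  exact hne this
end

section
/- In a transversal design TD(2,q), suppose q-2 blocks from one parallel class and q-2 blocks from a second parallel class cover exactly the same set of 2(q-2) points. Then no third parallel class contains q-2 blocks covering exactly this same point set. -/
section Aux

variable {α : Type} [DecidableEq α] [Fintype α] {q : ℕ}

lemma class_disj_blocks (D : RTD α 2 q) {C : Finset (Finset α)} (hC : C ∈ D.classes)
    {B B' : Finset α} (hB : B ∈ C) (hB' : B' ∈ C) (hne : B ≠ B') : Disjoint B B' := by
  rw [Finset.disjoint_left]
  intro x hxB hxB'
  obtain ⟨B0, _, huniq⟩ := D.class_cover C hC x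
  exact hne ((huniq B ⟨hB, hxB⟩).trans (huniq B' ⟨hB', hxB'⟩).symm)

lemma class_eq_of_mem (D : RTD α 2 q) {C C' : Finset (Finset α)} (hC : C ∈ D.classes)
    (hC' : C' ∈ D.classes) {B : Finset α} (hB : B ∈ C) (hB' : B ∈ C') : C = C' := by
  obtain ⟨C0, _, huniq⟩ := D.block_class B (D.class_sub C hC hB)
  exact (huniq C ⟨hC, hB⟩).trans (huniq C' ⟨hC', hB'⟩).symm

lemma leftover_biUnion (D : RTD α 2 q) {C S : Finset (Finset α)} (hC : C ∈ D.classes)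
    (hS : S ⊆ C) : (C \ S).biUnion id = (S.biUnion id)ᶜ := by
  ext x
  simp only [Finset.mem_biUnion, Finset.mem_compl, Finset.mem_sdiff, id]
  obtain ⟨B0, ⟨hB0C, hxB0⟩, huniq⟩ := D.class_cover C hC x
  constructor
  · rintro ⟨B, ⟨hBC, hBS⟩, hxB⟩ ⟨B', hB'S, hxB'⟩
    have e1 : B = B0 := huniq B ⟨hBC, hxB⟩
    have e2 : B' = B0 := huniq B' ⟨hS hB'S, hxB'⟩
    exact hBS (e1.trans e2.symm ▸ hB'S)
  · intro hx
    exact ⟨B0, ⟨hB0C, fun hB0S => hx ⟨B0, hB0S, hxB0⟩⟩, hxB0⟩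

lemma block_pair (D : RTD α 2 q) {C T : Finset (Finset α)} (hC : C ∈ D.classes)
    (hT : T ⊆ C) {a : α} (ha : a ∈ T.biUnion id) {Ga : Finset α} (hGa : Ga ∈ D.groups)
    (haGa : a ∈ Ga) :
    ∃ B ∈ T, ∃ c, B = {a, c} ∧ c ∈ T.biUnion id ∧ c ∉ Ga := by
  simp only [Finset.mem_biUnion, id] at ha
  obtain ⟨B, hBT, haB⟩ := ha
  have hBbl : B ∈ D.blocks := D.class_sub C hC (hT hBT)
  have hB2 : B.card = 2 := D.block_size B hBbl
  obtain ⟨u, v, huv, hBuv⟩ := Finset.card_eq_two.mp hB2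
  have haB' := haB
  rw [hBuv] at haB'
  have hkey : ∃ c, B = {a, c} ∧ c ≠ a := by
    rcases Finset.mem_insert.mp haB' with rfl | hv
    · exact ⟨v, hBuv, huv.symm⟩
    · rcases Finset.mem_singleton.mp hv with rfl
      exact ⟨u, by rw [hBuv, Finset.pair_comm], huv⟩
  obtain ⟨c, hBc, hca⟩ := hkey
  have hcB : c ∈ B := by rw [hBc]; simp
  refine ⟨B, hBT, c, hBc, ?_, ?_⟩
  · simp only [Finset.mem_biUnion, id]
    exact ⟨B, hBT, hcB⟩
  · intro hcGa
    have h1 : (B ∩ Ga).card = 1 := D.block_meets_group B hBbl Ga hGa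
    obtain ⟨w, hw⟩ := Finset.card_eq_one.mp h1
    have ha' : a = w := Finset.mem_singleton.mp (hw ▸ Finset.mem_inter.mpr ⟨haB, haGa⟩)
    have hc' : c = w := Finset.mem_singleton.mp (hw ▸ Finset.mem_inter.mpr ⟨hcB, hcGa⟩)
    exact hca (hc'.trans ha'.symm)

end Aux

/-- In TD(2,q), if q-2 blocks from each of two distinct parallel classes
cover exactly the same set of 2(q-2) points, no third parallel class contains q-2
blocks covering exactly this same point set. -/
theorem stmt_3 {α : Type} [DecidableEq α] [Fintype α] (q : ℕ) (hq : 3 ≤ q)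
    (D : RTD α 2 q)
    (P1 P2 P3 : Finset (Finset α))
    (h1 : P1 ∈ D.classes) (h2 : P2 ∈ D.classes) (h3 : P3 ∈ D.classes)
    (h12 : P1 ≠ P2) (h13 : P1 ≠ P3) (h23 : P2 ≠ P3)
    (S1 S2 : Finset (Finset α)) (hS1 : S1 ⊆ P1) (hS2 : S2 ⊆ P2)
    (hc1 : S1.card = q - 2) (hc2 : S2.card = q - 2)
    (hsame : S1.biUnion id = S2.biUnion id) :
    ¬ ∃ S3 ⊆ P3, S3.card = q - 2 ∧ S3.biUnion id = S1.biUnion id := by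
  rintro ⟨S3, hS3, hc3, hsame3⟩
  set X := S1.biUnion id with hX
  have hT1 : (P1 \ S1).biUnion id = Xᶜ := leftover_biUnion D h1 hS1
  have hT2 : (P2 \ S2).biUnion id = Xᶜ := by
    rw [leftover_biUnion D h2 hS2, ← hsame]
  have hT3 : (P3 \ S3).biUnion id = Xᶜ := by
    rw [leftover_biUnion D h3 hS3, hsame3]
  have hT1card : (P1 \ S1).card = 2 := by
    rw [Finset.card_sdiff_of_subset hS1, D.class_card P1 h1, hc1]; omega
  -- pick a point a of the complement
  obtain ⟨a, ha1⟩ : ((P1 \ S1).biUnion id).Nonempty := by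
    obtain ⟨B, hB⟩ : (P1 \ S1).Nonempty := Finset.card_pos.mp (by omega)
    have hBbl : B ∈ D.blocks := D.class_sub P1 h1 (Finset.sdiff_subset hB)
    obtain ⟨a, haB⟩ : B.Nonempty :=
      Finset.card_pos.mp (by rw [D.block_size B hBbl]; omega)
    exact ⟨a, Finset.mem_biUnion.mpr ⟨B, hB, haB⟩⟩
  obtain ⟨Ga, ⟨hGa, haGa⟩, -⟩ := D.groups_partition a
  set Z := Xᶜ \ Ga with hZdef
  have hZcard : Z.card = 2 := by
    have hrw : Z = (P1 \ S1).biUnion (fun B => B \ Ga) := by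
      rw [hZdef, ← hT1]
      ext x
      simp only [Finset.mem_sdiff, Finset.mem_biUnion, id]
      tauto
    rw [hrw, Finset.card_biUnion]
    · have hone : ∀ B ∈ P1 \ S1, (B \ Ga).card = 1 := by
        intro B hB
        have hBbl : B ∈ D.blocks := D.class_sub P1 h1 (Finset.sdiff_subset hB)
        have h2c : B.card = 2 := D.block_size B hBbl
        have h1c : (B ∩ Ga).card = 1 := D.block_meets_group B hBbl Ga hGa
        have := Finset.card_inter_add_card_sdiff B Ga
        omega
      rw [Finset.sum_congr rfl hone, Finset.sum_const, hT1card, smul_eq_mul]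
    · intro B hB B' hB' hne
      exact Disjoint.mono (Finset.sdiff_subset) (Finset.sdiff_subset)
        (class_disj_blocks D h1 (Finset.sdiff_subset hB) (Finset.sdiff_subset hB') hne)
  -- the a-blocks in the three leftovers
  have ha2 : a ∈ (P2 \ S2).biUnion id := by rw [hT2, ← hT1]; exact ha1
  have ha3 : a ∈ (P3 \ S3).biUnion id := by rw [hT3, ← hT1]; exact ha1
  obtain ⟨B1, hB1T, c1, hB1eq, hc1X, hc1G⟩ :=
    block_pair D h1 Finset.sdiff_subset ha1 hGa haGa
  obtain ⟨B2, hB2T, c2, hB2eq, hc2X, hc2G⟩ :=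
    block_pair D h2 Finset.sdiff_subset ha2 hGa haGa
  obtain ⟨B3, hB3T, c3, hB3eq, hc3X, hc3G⟩ :=
    block_pair D h3 Finset.sdiff_subset ha3 hGa haGa
  have hc1Z : c1 ∈ Z := Finset.mem_sdiff.mpr ⟨hT1 ▸ hc1X, hc1G⟩
  have hc2Z : c2 ∈ Z := Finset.mem_sdiff.mpr ⟨hT2 ▸ hc2X, hc2G⟩
  have hc3Z : c3 ∈ Z := Finset.mem_sdiff.mpr ⟨hT3 ▸ hc3X, hc3G⟩
  have contra : ∀ {Pi Pj Si Sj : Finset (Finset α)},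
      Pi ∈ D.classes → Pj ∈ D.classes → Pi ≠ Pj →
      ∀ {Bi Bj : Finset α}, Bi ∈ Pi \ Si → Bj ∈ Pj \ Sj → Bi = Bj → False := by
    intro Pi Pj Si Sj hPi hPj hnePQ Bi Bj hBi hBj hBij
    exact hnePQ (class_eq_of_mem D hPi hPj (Finset.mem_sdiff.mp hBi).1
      (hBij ▸ (Finset.mem_sdiff.mp hBj).1))
  obtain ⟨u, v, -, hZuv⟩ := Finset.card_eq_two.mp hZcard
  rw [hZuv] at hc1Z hc2Z hc3Z
  simp only [Finset.mem_insert, Finset.mem_singleton] at hc1Z hc2Z hc3Z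
  rcases hc1Z with rfl | rfl <;> rcases hc2Z with h2' | h2' <;>
      rcases hc3Z with h3' | h3' <;>
    first
      | (refine contra h1 h2 h12 hB1T hB2T ?_; rw [hB1eq, hB2eq, h2']; done)
      | (refine contra h1 h3 h13 hB1T hB3T ?_; rw [hB1eq, hB3eq, h3']; done)
      | (refine contra h2 h3 h23 hB2T hB3T ?_; rw [hB2eq, hB3eq, h2', h3'])
end

section
/- In a resolvable transversal design TD(q-1,q), let P = {p1, p2, p3} be three points lying in three different groups. For any set R of blocks, at most three parallel classes each contribute q-2 blocks to R none of which contains a point of P. -/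
/-! Each counted parallel class has at most two blocks meeting `P`, so the three blocks of
the class through `p1`, `p2`, `p3` cannot be distinct: the class has a block through two
points of `P`. Since two points from different groups lie in exactly one block, and that
block in exactly one class, each of the three pairs of `P` accounts for at most one class. -/

theorem Finset.exists_mem_two_of_card_le_card_filter_add_two {β : Type*} [DecidableEq β]
    {C : Finset (Finset β)} {x y z : β}
    (hx : ∃ B ∈ C, x ∈ B) (hy : ∃ B ∈ C, y ∈ B) (hz : ∃ B ∈ C, z ∈ B)
    (hcard : C.card ≤ (C.filter fun B => x ∉ B ∧ y ∉ B ∧ z ∉ B).card + 2) :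
    (∃ B ∈ C, x ∈ B ∧ y ∈ B) ∨ (∃ B ∈ C, x ∈ B ∧ z ∈ B) ∨ (∃ B ∈ C, y ∈ B ∧ z ∈ B) := by
  obtain ⟨Bx, hBx, hxBx⟩ := hx
  obtain ⟨By, hBy, hyBy⟩ := hy
  obtain ⟨Bz, hBz, hzBz⟩ := hz
  by_contra! hnone
  obtain ⟨hxy, hxz, hyz⟩ := hnone
  have hmeet : 2 < (C.filter fun B => ¬(x ∉ B ∧ y ∉ B ∧ z ∉ B)).card := by
    refine Finset.two_lt_card.mpr ⟨Bx, ?_, By, ?_, Bz, ?_, ?_, ?_, ?_⟩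
    · simp [hBx, hxBx]
    · simp [hBy, hyBy]
    · simp [hBz, hzBz]
    · rintro rfl; exact hxy Bx hBx hxBx hyBy
    · rintro rfl; exact hxz Bx hBx hxBx hzBz
    · rintro rfl; exact hyz By hBy hyBy hzBz
  have := Finset.card_filter_add_card_filter_not (s := C)
    (fun B => x ∉ B ∧ y ∉ B ∧ z ∉ B)
  omega

variable {α : Type} [DecidableEq α] [Fintype α] {ℓ h : ℕ}

def TD.Separated (D : TD α ℓ h) (x y : α) : Prop :=
  x ≠ y ∧ ∀ G ∈ D.groups, ¬(x ∈ G ∧ y ∈ G)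

theorem TD.separated_of_mem_of_mem (D : TD α ℓ h) {Gx Gy : Finset α} (hGx : Gx ∈ D.groups)
    (hGy : Gy ∈ D.groups) (hne : Gx ≠ Gy) {x y : α} (hx : x ∈ Gx) (hy : y ∈ Gy) :
    D.Separated x y := by
  have hsame : ∀ G ∈ D.groups, ¬(x ∈ G ∧ y ∈ G) := by
    rintro G hG ⟨hxG, hyG⟩
    obtain ⟨_, _, hxu⟩ := D.groups_partition x
    obtain ⟨_, _, hyu⟩ := D.groups_partition y
    exact hne (((hxu Gx ⟨hGx, hx⟩).trans (hxu G ⟨hG, hxG⟩).symm).trans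
      ((hyu G ⟨hG, hyG⟩).trans (hyu Gy ⟨hGy, hy⟩).symm))
  exact ⟨fun hxy => hsame Gx hGx ⟨hx, hxy ▸ hx⟩, hsame⟩

def RTD.classesThrough (D : RTD α ℓ h) (x y : α) : Finset (Finset (Finset α)) :=
  D.classes.filter fun C => ∃ B ∈ C, x ∈ B ∧ y ∈ B

theorem RTD.card_classesThrough_le_one (D : RTD α ℓ h) {x y : α} (hxy : D.Separated x y) :
    (D.classesThrough x y).card ≤ 1 := by
  refine Finset.card_le_one.mpr fun C hC C' hC' => ?_
  obtain ⟨hC, B, hBC, hxB, hyB⟩ := Finset.mem_filter.mp hC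
  obtain ⟨hC', B', hB'C', hxB', hyB'⟩ := Finset.mem_filter.mp hC'
  obtain ⟨B₀, hB₀, hB₀u⟩ := D.pair_unique x y hxy.1 hxy.2
  have hB : B = B₀ := hB₀u B ⟨D.class_sub C hC hBC, hxB, hyB⟩
  have hB' : B' = B₀ := hB₀u B' ⟨D.class_sub C' hC' hB'C', hxB', hyB'⟩
  obtain ⟨_, _, hclassu⟩ := D.block_class B₀ hB₀.1
  exact (hclassu C ⟨hC, hB ▸ hBC⟩).trans (hclassu C' ⟨hC', hB' ▸ hB'C'⟩).symm

theorem RTD.mem_classesThrough_of_le_card_filter (D : RTD α ℓ h) {C : Finset (Finset α)}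
    (hC : C ∈ D.classes) {x y z : α}
    (hcard : h - 2 ≤ (C.filter fun B => x ∉ B ∧ y ∉ B ∧ z ∉ B).card) :
    C ∈ D.classesThrough x y ∪ D.classesThrough x z ∪ D.classesThrough y z := by
  have hcover : ∀ p, ∃ B ∈ C, p ∈ B := fun p =>
    (D.class_cover C hC p).exists.imp fun _ hB => ⟨hB.1, hB.2⟩
  have hpair := Finset.exists_mem_two_of_card_le_card_filter_add_two (hcover x) (hcover y)
    (hcover z) (by rw [D.class_card C hC]; omega)
  simpa only [RTD.classesThrough, Finset.mem_union, Finset.mem_filter, hC, true_and,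
    or_assoc] using hpair

theorem stmt_5_general {α : Type} [DecidableEq α] [Fintype α] (q : ℕ)
    (D : RTD α (q - 1) q)
    (p1 p2 p3 : α)
    (hgroups : ∃ G1 ∈ D.groups, ∃ G2 ∈ D.groups, ∃ G3 ∈ D.groups,
      G1 ≠ G2 ∧ G1 ≠ G3 ∧ G2 ≠ G3 ∧ p1 ∈ G1 ∧ p2 ∈ G2 ∧ p3 ∈ G3)
    (R : Finset (Finset α)) :
    (D.classes.filter (fun C =>
      q - 2 ≤ (C.filter (fun B => B ∈ R ∧ p1 ∉ B ∧ p2 ∉ B ∧ p3 ∉ B)).card)).card ≤ 3 := by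
  obtain ⟨G1, hG1, G2, hG2, G3, hG3, h12, h13, h23, hp1, hp2, hp3⟩ := hgroups
  have hsub : D.classes.filter (fun C =>
      q - 2 ≤ (C.filter (fun B => B ∈ R ∧ p1 ∉ B ∧ p2 ∉ B ∧ p3 ∉ B)).card) ⊆
      D.classesThrough p1 p2 ∪ D.classesThrough p1 p3 ∪ D.classesThrough p2 p3 := by
    intro C hC
    obtain ⟨hC, hcard⟩ := Finset.mem_filter.mp hC
    refine D.mem_classesThrough_of_le_card_filter hC (hcard.trans (Finset.card_le_card ?_))
    exact Finset.monotone_filter_right C fun _ _ hB => hB.2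
  calc _ ≤ _ := Finset.card_le_card hsub
    _ ≤ (D.classesThrough p1 p2).card + (D.classesThrough p1 p3).card
          + (D.classesThrough p2 p3).card :=
        (Finset.card_union_le _ _).trans (Nat.add_le_add_right (Finset.card_union_le _ _) _)
    _ ≤ 1 + 1 + 1 := Nat.add_le_add (Nat.add_le_add
        (D.card_classesThrough_le_one (D.separated_of_mem_of_mem hG1 hG2 h12 hp1 hp2))
        (D.card_classesThrough_le_one (D.separated_of_mem_of_mem hG1 hG3 h13 hp1 hp3)))
        (D.card_classesThrough_le_one (D.separated_of_mem_of_mem hG2 hG3 h23 hp2 hp3))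

/-- In a resolvable TD(q-1,q), let p1, p2, p3 be three points lying in
three different groups. For any set R of blocks, at most three parallel classes each
contribute q-2 blocks to R none of which contains any of p1, p2, p3. -/
theorem stmt_5 {α : Type} [DecidableEq α] [Fintype α] (q : ℕ) (hq : 3 ≤ q)
    (D : RTD α (q - 1) q)
    (p1 p2 p3 : α)
    (hgroups : ∃ G1 ∈ D.groups, ∃ G2 ∈ D.groups, ∃ G3 ∈ D.groups,
      G1 ≠ G2 ∧ G1 ≠ G3 ∧ G2 ≠ G3 ∧ p1 ∈ G1 ∧ p2 ∈ G2 ∧ p3 ∈ G3)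
    (R : Finset (Finset α)) (hR : R ⊆ D.blocks) :
    (D.classes.filter (fun C =>
      q - 2 ≤ (C.filter (fun B => B ∈ R ∧ p1 ∉ B ∧ p2 ∉ B ∧ p3 ∉ B)).card)).card ≤ 3 :=
  stmt_5_general q D p1 p2 p3 hgroups R
end

section
/- Let q ≥ 3 be a prime power and let TD(q-1,q) be a resolvable transversal design. The set system whose points are the q(q-1) points of the design and whose blocks are the q² blocks together with the q-1 groups of the design is a combinatorial batch code with parameters n = q²+q-1 items, total storage N = q³-q, k = q²-q-1, and m = q²-q servers. -/
section Aux

lemma card_filter_eq_one' {β : Type*} [DecidableEq β] {s : Finset β} {p : β → Prop}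
    [DecidablePred p] (h : ∃! b, b ∈ s ∧ p b) : (s.filter p).card = 1 := by
  obtain ⟨b, hb, hu⟩ := h
  rw [Finset.card_eq_one]
  refine ⟨b, ?_⟩
  ext c
  simp only [Finset.mem_filter, Finset.mem_singleton]
  exact ⟨fun hc => hu c hc, fun hc => hc ▸ ⟨hb.1, hb.2⟩⟩

lemma nat_mul_pred (n : ℕ) : n * (n - 1) = n * n - n := by
  cases n with
  | zero => simp
  | succ m => simp [Nat.succ_sub_one, Nat.mul_succ, Nat.succ_mul]

lemma nat_mul_pred_add (n : ℕ) : n * (n - 1) + n = n * n := by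
  cases n with
  | zero => simp
  | succ m =>
    simp only [Nat.succ_sub_one]
    ring

variable {α : Type} [DecidableEq α] [Fintype α] {q : ℕ}

lemma sum_inter_card (T : Finset (Finset α)) (W : Finset α) :
    ∑ S ∈ T, (S ∩ W).card = ∑ y ∈ W, (T.filter (fun S => y ∈ S)).card := by
  have h1 : ∀ S : Finset α, (S ∩ W).card = ∑ y ∈ W, if y ∈ S then 1 else 0 := by
    intro S
    rw [Finset.inter_comm, ← Finset.filter_mem_eq_inter, Finset.card_filter]
  simp only [h1, Finset.card_filter]
  exact Finset.sum_comm

lemma offDiag_inter (S W : Finset α) :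
    (S ∩ W).offDiag = W.offDiag.filter (fun p => p.1 ∈ S ∧ p.2 ∈ S) := by
  ext ⟨a, b⟩
  simp only [Finset.mem_offDiag, Finset.mem_filter, Finset.mem_inter]
  tauto

lemma sum_offDiag_inter (T : Finset (Finset α)) (W : Finset α) :
    ∑ S ∈ T, (S ∩ W).offDiag.card
      = ∑ p ∈ W.offDiag, (T.filter (fun S => p.1 ∈ S ∧ p.2 ∈ S)).card := by
  simp only [offDiag_inter, Finset.card_filter]
  exact Finset.sum_comm

lemma offDiag_filter' {β : Type*} [DecidableEq β] (R : Finset β) (p : β → Prop)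
    [DecidablePred p] :
    (R.filter p).offDiag = R.offDiag.filter (fun pr => p pr.1 ∧ p pr.2) := by
  ext ⟨a, b⟩
  simp only [Finset.mem_offDiag, Finset.mem_filter]
  tauto

lemma sum_deg (R : Finset (Finset α)) (U : Finset α) (h : ∀ S ∈ R, S ⊆ U) :
    ∑ x ∈ U, (R.filter (fun S => x ∈ S)).card = ∑ S ∈ R, S.card := by
  simp only [Finset.card_filter]
  rw [Finset.sum_comm]
  refine Finset.sum_congr rfl (fun S hS => ?_)
  rw [← Finset.card_filter, Finset.filter_mem_eq_inter,
    Finset.inter_eq_right.mpr (h S hS)]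

lemma rtd_disj (hq : 3 ≤ q) (D : RTD α (q-1) q) : Disjoint D.blocks D.groups := by
  rw [Finset.disjoint_left]
  intro B hB hG
  have h1 := D.block_size B hB
  have h2 := D.group_size B hG
  omega

lemma rtd_blocks_eq (D : RTD α (q-1) q) : D.blocks = D.classes.biUnion (fun C => C) := by
  ext B
  simp only [Finset.mem_biUnion]
  constructor
  · intro hB
    obtain ⟨C, hC, -⟩ := D.block_class B hB
    exact ⟨C, hC.1, hC.2⟩
  · rintro ⟨C, hC, hBC⟩
    exact D.class_sub C hC hBC

lemma rtd_classes_disj (D : RTD α (q-1) q) :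
    ∀ C ∈ D.classes, ∀ C' ∈ D.classes, C ≠ C' → Disjoint C C' := by
  intro C hC C' hC' hne
  rw [Finset.disjoint_left]
  intro B hBC hBC'
  obtain ⟨C₀, -, huniq⟩ := D.block_class B (D.class_sub C hC hBC)
  exact hne ((huniq C ⟨hC, hBC⟩).trans (huniq C' ⟨hC', hBC'⟩).symm)

lemma rtd_blocks_card (D : RTD α (q-1) q) : D.blocks.card = q^2 := by
  rw [rtd_blocks_eq D, Finset.card_biUnion (rtd_classes_disj D)]
  rw [Finset.sum_congr rfl (fun C hC => D.class_card C hC)]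
  rw [Finset.sum_const, D.classes_card, smul_eq_mul, sq]

lemma rtd_union_card (hq : 3 ≤ q) (D : RTD α (q-1) q) :
    (D.blocks ∪ D.groups).card = q^2 + q - 1 := by
  rw [Finset.card_union_of_disjoint (rtd_disj hq D), rtd_blocks_card D, D.groups_card]
  omega

lemma rtd_sum_card (hq : 3 ≤ q) (D : RTD α (q-1) q) :
    (∑ X ∈ D.blocks ∪ D.groups, X.card) = q^3 - q := by
  rw [Finset.sum_union (rtd_disj hq D)]
  rw [Finset.sum_congr rfl (fun B hB => D.block_size B hB)]
  rw [Finset.sum_congr rfl (fun G hG => D.group_size G hG)]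
  rw [Finset.sum_const, Finset.sum_const, rtd_blocks_card D, D.groups_card,
    smul_eq_mul, smul_eq_mul]
  obtain ⟨c, rfl⟩ : ∃ c, q = c+3 := ⟨q-3, by omega⟩
  simp only [show c+3-1 = c+2 from rfl]
  have e1 : (c+3)^2 * (c+2) + (c+2)*(c+3) + (c+3) = (c+3)^3 := by ring
  omega

lemma rtd_card_points (hq : 3 ≤ q) (D : RTD α (q-1) q) : Fintype.card α = q^2 - q := by
  have hc := D.card_points
  obtain ⟨c, rfl⟩ : ∃ c, q = c+3 := ⟨q-3, by omega⟩
  simp only [show c+3-1 = c+2 from rfl] at hc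
  have e1 : (c+2)*(c+3) + (c+3) = (c+3)^2 := by ring
  omega

lemma rtd_deg (hq : 3 ≤ q) (D : RTD α (q-1) q) (x : α) :
    ((D.blocks ∪ D.groups).filter (fun S => x ∈ S)).card = q + 1 := by
  rw [Finset.filter_union,
    Finset.card_union_of_disjoint ((rtd_disj hq D).mono (Finset.filter_subset _ _)
      (Finset.filter_subset _ _))]
  have hg : (D.groups.filter (fun S => x ∈ S)).card = 1 :=
    card_filter_eq_one' (D.groups_partition x)
  have hb : (D.blocks.filter (fun S => x ∈ S)).card = q := by
    rw [rtd_blocks_eq D, Finset.filter_biUnion, Finset.card_biUnion]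
    · rw [Finset.sum_congr rfl
        (fun C hC => card_filter_eq_one' (D.class_cover C hC x)), Finset.sum_const,
        D.classes_card, smul_eq_mul, mul_one]
    · intro C hC C' hC' hne
      exact (rtd_classes_disj D C hC C' hC' hne).mono (Finset.filter_subset _ _)
        (Finset.filter_subset _ _)
  omega

lemma rtd_pair (hq : 3 ≤ q) (D : RTD α (q-1) q) {x y : α} (hxy : x ≠ y) :
    ((D.blocks ∪ D.groups).filter (fun S => x ∈ S ∧ y ∈ S)).card = 1 := by
  apply card_filter_eq_one'
  by_cases hg : ∃ G ∈ D.groups, x ∈ G ∧ y ∈ G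
  · obtain ⟨G, hG, hxG, hyG⟩ := hg
    refine ⟨G, ⟨Finset.mem_union.mpr (Or.inr hG), hxG, hyG⟩, ?_⟩
    rintro S ⟨hS, hxS, hyS⟩
    rcases Finset.mem_union.mp hS with hSb | hSg
    · exfalso
      have h1 := D.block_meets_group S hSb G hG
      have h2 : ({x, y} : Finset α) ⊆ S ∩ G := by
        intro z hz
        rcases Finset.mem_insert.mp hz with rfl | hz
        · exact Finset.mem_inter.mpr ⟨hxS, hxG⟩
        · rw [Finset.mem_singleton] at hz
          subst hz
          exact Finset.mem_inter.mpr ⟨hyS, hyG⟩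
      have := Finset.card_le_card h2
      rw [Finset.card_pair hxy] at this
      omega
    · obtain ⟨G₀, -, hu⟩ := D.groups_partition x
      exact (hu S ⟨hSg, hxS⟩).trans (hu G ⟨hG, hxG⟩).symm
  · push_neg at hg
    obtain ⟨B, ⟨hB, hxB, hyB⟩, hu⟩ := D.pair_unique x y hxy (fun G hG hx => hg G hG hx.1 hx.2)
    refine ⟨B, ⟨Finset.mem_union.mpr (Or.inl hB), hxB, hyB⟩, ?_⟩
    rintro S ⟨hS, hxS, hyS⟩
    rcases Finset.mem_union.mp hS with hSb | hSg
    · exact hu S ⟨hSb, hxS, hyS⟩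
    · exact (hg S hSg hxS hyS).elim

lemma rtd_inter_le_one (hq : 3 ≤ q) (D : RTD α (q-1) q) {S S' : Finset α}
    (hS : S ∈ D.blocks ∪ D.groups) (hS' : S' ∈ D.blocks ∪ D.groups) (hne : S ≠ S') :
    (S ∩ S').card ≤ 1 := by
  by_contra h
  push_neg at h
  obtain ⟨x, hx, y, hy, hxy⟩ := Finset.one_lt_card.mp h
  rw [Finset.mem_inter] at hx hy
  have hp := rtd_pair hq D hxy
  have hsub : ({S, S'} : Finset (Finset α)) ⊆
      (D.blocks ∪ D.groups).filter (fun T => x ∈ T ∧ y ∈ T) := by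
    intro T hT
    rcases Finset.mem_insert.mp hT with rfl | hT
    · exact Finset.mem_filter.mpr ⟨hS, hx.1, hy.1⟩
    · rw [Finset.mem_singleton] at hT
      subst hT
      exact Finset.mem_filter.mpr ⟨hS', hx.2, hy.2⟩
  have := Finset.card_le_card hsub
  rw [Finset.card_pair hne, hp] at this
  omega

end Aux

set_option maxHeartbeats 2000000 in
/-- For q ≥ 3 a prime power, the set system whose servers are the q(q-1)
points of a resolvable TD(q-1,q) and whose items are its q² blocks together with its
q-1 groups is an (n,N,k,m)-CBC with n = q²+q-1, N = q³-q, k = q²-q-1, m = q²-q: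
the number of items, the total storage, the number of servers are as stated, and the
Hall condition holds for any r ≤ q²-q-1 items. -/
theorem stmt_6 {α : Type} [DecidableEq α] [Fintype α] (q : ℕ) (hq : 3 ≤ q)
    (hpp : IsPrimePow q) (D : RTD α (q - 1) q) :
    (D.blocks ∪ D.groups).card = q ^ 2 + q - 1 ∧
    (∑ X ∈ D.blocks ∪ D.groups, X.card) = q ^ 3 - q ∧
    Fintype.card α = q ^ 2 - q ∧
    (∀ R ⊆ D.blocks ∪ D.groups, R.card ≤ q ^ 2 - q - 1 →
      R.card ≤ (R.biUnion id).card) := by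
  refine ⟨rtd_union_card hq D, rtd_sum_card hq D, rtd_card_points hq D, ?_⟩
  intro R hR hRcard
  by_contra hlt
  push_neg at hlt
  set T : Finset (Finset α) := D.blocks ∪ D.groups with hTdef
  set U : Finset α := R.biUnion id with hUdef
  have hsubU : ∀ S ∈ R, S ⊆ U := fun S hS => Finset.subset_biUnion_of_mem id hS
  set W : Finset α := Uᶜ with hWdef
  have hqsq : q^2 = q*q := sq q
  have hq3 : 3*q ≤ q*q := Nat.mul_le_mul_right q hq
  have hcardUW : U.card + W.card = q^2 - q := by
    have h1 : W.card = Fintype.card α - U.card := Finset.card_compl U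
    have h2 : U.card ≤ Fintype.card α := Finset.card_le_univ U
    rw [rtd_card_points hq D] at h1 h2
    omega
  have hw2 : 2 ≤ W.card := by
    by_contra h
    omega
  by_cases hwsmall : W.card ≤ 2*q - 1
  · -- small-complement branch: pair counting on W
    have hs1 : ∑ S ∈ T, (S ∩ W).card = (q+1) * W.card := by
      rw [sum_inter_card, Finset.sum_congr rfl (fun y _ => rtd_deg hq D y),
        Finset.sum_const, smul_eq_mul, mul_comm]
    have hs2 : ∑ S ∈ T, (S ∩ W).offDiag.card = W.card * W.card - W.card := by
      rw [sum_offDiag_inter,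
        Finset.sum_congr rfl (fun p hp => rtd_pair hq D (Finset.mem_offDiag.mp hp).2.2),
        Finset.sum_const, smul_eq_mul, mul_one, Finset.offDiag_card]
    set M : Finset (Finset α) := T.filter (fun S => (S ∩ W).Nonempty) with hMdef
    have hMbound : 2 * ((q+1) * W.card) ≤ 2 * M.card + (W.card * W.card - W.card) := by
      have key : ∀ S ∈ T, 2 * (S ∩ W).card ≤
          (if (S ∩ W).Nonempty then 2 else 0) + (S ∩ W).offDiag.card := by
        intro S _
        by_cases hne : (S ∩ W).Nonempty
        · have hn : 1 ≤ (S ∩ W).card := Finset.card_pos.mpr hne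
          rw [if_pos hne, Finset.offDiag_card]
          set n := (S ∩ W).card
          have h3 : 3 * n ≤ n * n + 2 := by
            rcases Nat.lt_or_ge n 3 with h | h
            · interval_cases n <;> omega
            · have := Nat.mul_le_mul_right n h
              omega
          omega
        · rw [Finset.not_nonempty_iff_eq_empty] at hne
          simp [hne]
      calc 2 * ((q+1) * W.card) = ∑ S ∈ T, 2 * (S ∩ W).card := by
            rw [← Finset.mul_sum, hs1]
        _ ≤ ∑ S ∈ T, ((if (S ∩ W).Nonempty then 2 else 0) + (S ∩ W).offDiag.card) :=
            Finset.sum_le_sum key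
        _ = 2 * M.card + (W.card * W.card - W.card) := by
            rw [Finset.sum_add_distrib, hs2, hMdef, Finset.card_filter, Finset.mul_sum]
            congr 1
            refine Finset.sum_congr rfl (fun S _ => ?_)
            split <;> simp
    have hRsub : R ⊆ T.filter (fun S => ¬ (S ∩ W).Nonempty) := by
      intro S hS
      refine Finset.mem_filter.mpr ⟨hR hS, ?_⟩
      rintro ⟨x, hx⟩
      rw [Finset.mem_inter, hWdef, Finset.mem_compl] at hx
      exact hx.2 (hsubU S hS hx.1)
    have hMA : M.card + R.card + 1 ≤ q*q + q := by
      have h1 := Finset.card_filter_add_card_filter_not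
        (s := T) (p := fun S => (S ∩ W).Nonempty)
      have h2 := Finset.card_le_card hRsub
      rw [← hMdef, rtd_union_card hq D] at h1
      omega
    -- arithmetic contradiction
    have hWle : W.card ≤ W.card * W.card := Nat.le_mul_of_pos_left _ (by omega)
    have hF1 : 2*(q*W.card) + 3*W.card ≤ 2*M.card + W.card*W.card := by
      have h3 := Nat.add_le_add_right hMbound W.card
      rw [add_assoc, Nat.sub_add_cancel hWle] at h3
      have he : 2*((q+1) * W.card) + W.card = 2*(q * W.card) + 3*W.card := by ring
      omega
    have hF4 : U.card + W.card + q = q*q := by omega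
    have hw1 : W.card + 1 ≤ 2*q := by omega
    have hF5 : W.card * W.card + 4*q ≤ 2*(q*W.card) + W.card + 2 := by
      zify
      nlinarith [mul_nonneg (show (0:ℤ) ≤ (W.card:ℤ) - 2 by push_cast; omega)
        (show (0:ℤ) ≤ 2*(q:ℤ) - 1 - W.card by push_cast; omega)]
    omega
  · -- large-complement branch: Cauchy-Schwarz / Corradi on U
    have hwbig : 2*q ≤ W.card := by omega
    have hu : U.card ≤ q^2 - 3*q := by omega
    set d : α → ℕ := fun x => (R.filter (fun S => x ∈ S)).card with hddef
    have ht1 : (q-1) * R.card ≤ ∑ x ∈ U, d x := by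
      rw [hddef, sum_deg R U hsubU]
      calc (q-1) * R.card = ∑ _S ∈ R, (q-1) := by rw [Finset.sum_const, smul_eq_mul, mul_comm]
        _ ≤ ∑ S ∈ R, S.card := by
            refine Finset.sum_le_sum (fun S hS => ?_)
            rcases Finset.mem_union.mp (hR hS) with hSb | hSg
            · exact le_of_eq (D.block_size S hSb).symm
            · rw [D.group_size S hSg]; omega
    have ht2 : ∑ x ∈ U, d x * (d x - 1) ≤ R.card * (R.card - 1) := by
      have step1 : ∀ x, d x * (d x - 1)
          = ∑ pr ∈ R.offDiag, if x ∈ pr.1 ∧ x ∈ pr.2 then 1 else 0 := by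
        intro x
        rw [hddef, nat_mul_pred, ← Finset.offDiag_card, offDiag_filter', Finset.card_filter]
      calc ∑ x ∈ U, d x * (d x - 1)
          = ∑ pr ∈ R.offDiag, ∑ x ∈ U, (if x ∈ pr.1 ∧ x ∈ pr.2 then 1 else 0) := by
            simp only [step1]; exact Finset.sum_comm
        _ ≤ ∑ _pr ∈ R.offDiag, 1 := by
            refine Finset.sum_le_sum (fun pr hpr => ?_)
            rw [← Finset.card_filter]
            obtain ⟨h1, h2, hne⟩ := Finset.mem_offDiag.mp hpr
            calc (U.filter (fun x => x ∈ pr.1 ∧ x ∈ pr.2)).card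
                ≤ (pr.1 ∩ pr.2).card := by
                  apply Finset.card_le_card
                  intro x hx
                  have := Finset.mem_filter.mp hx
                  exact Finset.mem_inter.mpr this.2
              _ ≤ 1 := rtd_inter_le_one hq D (hR h1) (hR h2) hne
        _ = R.offDiag.card := by rw [Finset.sum_const, smul_eq_mul, mul_one]
        _ = R.card * R.card - R.card := Finset.offDiag_card R
        _ ≤ R.card * (R.card - 1) := by rw [nat_mul_pred]
    have hcs : (↑(∑ x ∈ U, d x) : ℤ)^2 ≤ (U.card : ℤ) *
        (↑(∑ x ∈ U, d x * (d x - 1)) + ↑(∑ x ∈ U, d x)) := by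
      have h0 := sq_sum_le_card_mul_sum_sq (s := U) (f := fun x => (d x : ℤ))
      have e1 : (∑ x ∈ U, (d x : ℤ)) = (↑(∑ x ∈ U, d x) : ℤ) := by push_cast; rfl
      have e2 : ∑ x ∈ U, (d x : ℤ)^2
          = (↑(∑ x ∈ U, d x * (d x - 1)) : ℤ) + ↑(∑ x ∈ U, d x) := by
        push_cast
        rw [← Finset.sum_add_distrib]
        refine Finset.sum_congr rfl (fun x _ => ?_)
        have h3 : ((d x * (d x - 1) + d x : ℕ) : ℤ) = ((d x * d x : ℕ) : ℤ) := by
          rw [nat_mul_pred_add]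
        push_cast at h3
        nlinarith [h3]
      rw [e1, e2] at h0
      exact h0
    -- set up integer variables and derive contradiction
    set sD : ℕ := ∑ x ∈ U, d x
    set eD : ℕ := ∑ x ∈ U, d x * (d x - 1)
    have hru : U.card + 1 ≤ R.card := hlt
    have hq1 : (1:ℕ) ≤ q := by omega
    have hZ1 : ((q:ℤ)-1) * R.card ≤ sD := by
      have := ht1
      zify [hq1] at this
      exact this
    have hZ2 : (eD:ℤ) ≤ (R.card:ℤ) * (R.card - 1) := by
      have := ht2
      rcases Nat.eq_zero_or_pos R.card with h0 | h1
      · simp [h0] at this ⊢; omega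
      · zify [h1] at this; exact this
    have hZ3 : (U.card:ℤ) ≤ (q:ℤ)^2 - 3*q := by
      have := hu
      zify [show 3*q ≤ q^2 by omega] at this
      exact this
    have hZ4 : (U.card:ℤ) + 1 ≤ R.card := by exact_mod_cast hru
    have hq3Z : (3:ℤ) ≤ q := by exact_mod_cast hq
    set sZ : ℤ := (sD : ℤ)
    set uZ : ℤ := (U.card : ℤ)
    set rZ : ℤ := (R.card : ℤ)
    set qZ : ℤ := (q : ℤ)
    have huZ0 : 0 ≤ uZ := Int.natCast_nonneg _
    have heD0 : 0 ≤ (eD:ℤ) := Int.natCast_nonneg _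
    have hrZ1 : 1 ≤ rZ := by omega
    have hscr : (qZ - 1) * rZ ≤ sZ := hZ1
    have hcs' : sZ^2 ≤ uZ * ((eD:ℤ) + sZ) := hcs
    nlinarith [mul_nonneg (show (0:ℤ) ≤ sZ - (qZ-1)*rZ by omega)
        (show (0:ℤ) ≤ sZ + (qZ-1)*rZ - uZ by nlinarith),
      mul_le_mul_of_nonneg_left hZ2 huZ0,
      mul_nonneg (show (0:ℤ) ≤ rZ - 1 - uZ by omega)
        (show (0:ℤ) ≤ (qZ-1)*rZ by nlinarith),
      mul_pos (show (0:ℤ) < rZ by omega) (show (0:ℤ) < rZ by omega)]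
end

section
/- For m = q²-q, k = q²-q-1, n = q²+q-1 with q ≥ 3 a prime power, the least integer s with 1 ≤ s ≤ k-1 satisfying n ≤ (k-1)·C(m,s)/C(k-1,s) is s = q. -/
private lemma key_choose (M s : ℕ) :
    (M + 2).choose s * ((M + 2 - s) * (M + 1 - s)) =
      M.choose s * ((M + 2) * (M + 1)) := by
  have h1 := Nat.choose_mul_succ_eq (M + 1) s
  have h2 := Nat.choose_mul_succ_eq M s
  calc (M + 2).choose s * ((M + 2 - s) * (M + 1 - s))
      = ((M + 2).choose s * (M + 1 + 1 - s)) * (M + 1 - s) := by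
        rw [show M + 1 + 1 - s = M + 2 - s by omega]; ring
    _ = ((M + 1).choose s * (M + 1 + 1)) * (M + 1 - s) := by rw [← h1]
    _ = ((M + 1).choose s * (M + 1 - s)) * (M + 2) := by ring
    _ = (M.choose s * (M + 1)) * (M + 2) := by rw [← h2]
    _ = M.choose s * ((M + 2) * (M + 1)) := by ring

set_option maxHeartbeats 1000000 in
/-- For m = q²-q, k = q²-q-1, n = q²+q-1 with q ≥ 3 a prime power, the
least integer s with 1 ≤ s ≤ k-1 satisfying n ≤ (k-1)·C(m,s)/C(k-1,s) is s = q. -/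
theorem stmt_8 (q : ℕ) (hq : 3 ≤ q) (hpp : IsPrimePow q) :
    IsLeast {s : ℕ | 1 ≤ s ∧ s ≤ (q ^ 2 - q - 1) - 1 ∧
      ((q : ℚ) ^ 2 + q - 1 ≤
        ((q : ℚ) ^ 2 - q - 2) * ((q ^ 2 - q).choose s : ℚ) /
          ((q ^ 2 - q - 2).choose s : ℚ))} q := by
  set M : ℕ := q ^ 2 - q - 2 with hMdef
  have hq2 : q + 2 + q ≤ q ^ 2 := by nlinarith
  have hm2 : q ^ 2 - q = M + 2 := by omega
  have hsub : q ^ 2 - q - 1 - 1 = M := by omega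
  have hqM : q ≤ M := by omega
  set x : ℚ := (q : ℚ) with hxdef
  have hx : (3 : ℚ) ≤ x := by rw [hxdef]; exact_mod_cast hq
  have hA : (M : ℚ) = x ^ 2 - x - 2 := by
    have : (M : ℚ) = ((q ^ 2 : ℕ) : ℚ) - ((q : ℕ) : ℚ) - 2 := by
      rw [hMdef]
      push_cast [Nat.cast_sub (show q ≤ q ^ 2 by omega),
        Nat.cast_sub (show 2 ≤ q ^ 2 - q by omega)]
      ring
    simpa using this
  constructor
  · refine ⟨by omega, by omega, ?_⟩
    rw [hm2]
    have hCpos : (0 : ℚ) < (M.choose q : ℚ) := by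
      exact_mod_cast Nat.choose_pos hqM
    rw [le_div_iff₀ hCpos]
    have key := key_choose M q
    have keyQ : ((M + 2).choose q : ℚ) * ((x ^ 2 - 2 * x) * (x ^ 2 - 2 * x - 1)) =
        (M.choose q : ℚ) * (((M : ℚ) + 2) * ((M : ℚ) + 1)) := by
      have c1 : ((M + 2 - q : ℕ) : ℚ) = (M : ℚ) + 2 - x := by
        push_cast [Nat.cast_sub (show q ≤ M + 2 by omega)]; ring
      have c2 : ((M + 1 - q : ℕ) : ℚ) = (M : ℚ) + 1 - x := by
        push_cast [Nat.cast_sub (show q ≤ M + 1 by omega)]; ring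
      have := congrArg (fun n : ℕ => (n : ℚ)) key
      push_cast at this
      rw [c1, c2, hA] at this
      rw [hA]
      linear_combination this
    set C : ℚ := (M.choose q : ℚ)
    set D : ℚ := ((M + 2).choose q : ℚ)
    have hDpos : (0 : ℚ) ≤ D := by positivity
    have hP1 : (0 : ℚ) < x ^ 2 - 2 * x := by nlinarith
    have hP2 : (0 : ℚ) < x ^ 2 - 2 * x - 1 := by nlinarith
    have hpoly : (x ^ 2 + x - 1) * ((x ^ 2 - 2 * x) * (x ^ 2 - 2 * x - 1)) ≤
        (x ^ 2 - x - 2) * (((M : ℚ) + 2) * ((M : ℚ) + 1)) := by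
      rw [hA]; nlinarith [hx, sq_nonneg x]
    have h1 : (x ^ 2 + x - 1) * C * ((x ^ 2 - 2 * x) * (x ^ 2 - 2 * x - 1)) ≤
        (x ^ 2 - x - 2) * D * ((x ^ 2 - 2 * x) * (x ^ 2 - 2 * x - 1)) := by
      calc (x ^ 2 + x - 1) * C * ((x ^ 2 - 2 * x) * (x ^ 2 - 2 * x - 1))
          = C * ((x ^ 2 + x - 1) * ((x ^ 2 - 2 * x) * (x ^ 2 - 2 * x - 1))) := by ring
        _ ≤ C * ((x ^ 2 - x - 2) * (((M : ℚ) + 2) * ((M : ℚ) + 1))) :=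
            mul_le_mul_of_nonneg_left hpoly hCpos.le
        _ = (x ^ 2 - x - 2) * (C * (((M : ℚ) + 2) * ((M : ℚ) + 1))) := by ring
        _ = (x ^ 2 - x - 2) * (D * ((x ^ 2 - 2 * x) * (x ^ 2 - 2 * x - 1))) := by rw [← keyQ]
        _ = (x ^ 2 - x - 2) * D * ((x ^ 2 - 2 * x) * (x ^ 2 - 2 * x - 1)) := by ring
    exact le_of_mul_le_mul_right h1 (by positivity)
  · rintro s ⟨hs1, hs2, hineq⟩
    by_contra hcon
    push_neg at hcon
    rw [hsub] at hs2
    rw [hm2] at hineq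
    have hsM : s ≤ M := hs2
    have hCpos : (0 : ℚ) < (M.choose s : ℚ) := by
      exact_mod_cast Nat.choose_pos hsM
    rw [le_div_iff₀ hCpos] at hineq
    set y : ℚ := (s : ℚ) with hydef
    have hy1 : (1 : ℚ) ≤ y := by rw [hydef]; exact_mod_cast hs1
    have hy2 : y ≤ x - 1 := by
      have : (s : ℚ) + 1 ≤ (q : ℚ) := by exact_mod_cast hcon
      linarith
    have key := key_choose M s
    have keyQ : ((M + 2).choose s : ℚ) * ((x ^ 2 - x - y) * (x ^ 2 - x - 1 - y)) =
        (M.choose s : ℚ) * (((M : ℚ) + 2) * ((M : ℚ) + 1)) := by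
      have c1 : ((M + 2 - s : ℕ) : ℚ) = (M : ℚ) + 2 - y := by
        push_cast [Nat.cast_sub (show s ≤ M + 2 by omega)]; ring
      have c2 : ((M + 1 - s : ℕ) : ℚ) = (M : ℚ) + 1 - y := by
        push_cast [Nat.cast_sub (show s ≤ M + 1 by omega)]; ring
      have := congrArg (fun n : ℕ => (n : ℚ)) key
      push_cast at this
      rw [c1, c2, hA] at this
      rw [hA]
      linear_combination this
    set C : ℚ := (M.choose s : ℚ) with hCdef
    set D : ℚ := ((M + 2).choose s : ℚ) with hDdef
    clear_value C D
    have hP1 : (0 : ℚ) < x ^ 2 - x - y := by nlinarith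
    have hP2 : (0 : ℚ) < x ^ 2 - x - 1 - y := by nlinarith
    -- from hineq : (x^2 + x - 1) * C ≤ (x^2 - x - 2) * D
    have h1 : (x ^ 2 + x - 1) * ((x ^ 2 - x - y) * (x ^ 2 - x - 1 - y)) ≤
        (x ^ 2 - x - 2) * (((M : ℚ) + 2) * ((M : ℚ) + 1)) := by
      have h2 : (x ^ 2 + x - 1) * C * ((x ^ 2 - x - y) * (x ^ 2 - x - 1 - y)) ≤
          (x ^ 2 - x - 2) * D * ((x ^ 2 - x - y) * (x ^ 2 - x - 1 - y)) := by
        apply mul_le_mul_of_nonneg_right hineq (by positivity)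
      have h3 : (x ^ 2 - x - 2) * D * ((x ^ 2 - x - y) * (x ^ 2 - x - 1 - y)) =
          (x ^ 2 - x - 2) * (((M : ℚ) + 2) * ((M : ℚ) + 1)) * C := by
        calc (x ^ 2 - x - 2) * D * ((x ^ 2 - x - y) * (x ^ 2 - x - 1 - y))
            = (x ^ 2 - x - 2) * (D * ((x ^ 2 - x - y) * (x ^ 2 - x - 1 - y))) := by ring
          _ = (x ^ 2 - x - 2) * (C * (((M : ℚ) + 2) * ((M : ℚ) + 1))) := by rw [keyQ]
          _ = (x ^ 2 - x - 2) * (((M : ℚ) + 2) * ((M : ℚ) + 1)) * C := by ring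
      rw [h3] at h2
      have h4 : (x ^ 2 + x - 1) * ((x ^ 2 - x - y) * (x ^ 2 - x - 1 - y)) * C ≤
          (x ^ 2 - x - 2) * (((M : ℚ) + 2) * ((M : ℚ) + 1)) * C := by
        calc (x ^ 2 + x - 1) * ((x ^ 2 - x - y) * (x ^ 2 - x - 1 - y)) * C
            = (x ^ 2 + x - 1) * C * ((x ^ 2 - x - y) * (x ^ 2 - x - 1 - y)) := by ring
          _ ≤ _ := h2
      exact le_of_mul_le_mul_right h4 hCpos
    -- monotonicity + final contradiction
    have hstep1 : x ^ 2 - 2 * x + 1 ≤ x ^ 2 - x - y := by linarith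
    have hstep2 : x ^ 2 - 2 * x ≤ x ^ 2 - x - 1 - y := by linarith
    have hprod : (x ^ 2 - 2 * x + 1) * (x ^ 2 - 2 * x) ≤
        (x ^ 2 - x - y) * (x ^ 2 - x - 1 - y) := by
      apply mul_le_mul hstep1 hstep2 (by nlinarith [hx]) hP1.le
    have hfinal : (x ^ 2 + x - 1) * ((x ^ 2 - 2 * x + 1) * (x ^ 2 - 2 * x)) ≤
        (x ^ 2 - x - 2) * ((x ^ 2 - x) * (x ^ 2 - x - 1)) := by
      have := h1
      rw [hA] at this
      calc (x ^ 2 + x - 1) * ((x ^ 2 - 2 * x + 1) * (x ^ 2 - 2 * x))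
          ≤ (x ^ 2 + x - 1) * ((x ^ 2 - x - y) * (x ^ 2 - x - 1 - y)) := by
            apply mul_le_mul_of_nonneg_left hprod (by nlinarith [hx])
        _ ≤ (x ^ 2 - x - 2) * ((x ^ 2 - x - 2 + 2) * (x ^ 2 - x - 2 + 1)) := this
        _ = (x ^ 2 - x - 2) * ((x ^ 2 - x) * (x ^ 2 - x - 1)) := by ring
    nlinarith [hfinal, mul_pos (mul_pos (show (0:ℚ) < x by linarith)
      (show (0:ℚ) < x - 1 by linarith)) (show (0:ℚ) < x - 2 by linarith)]
end

section
/- For q ≥ 3 a prime power, with n = q²+q-1, k = q²-q-1, m = q²-q, and s = q, it holds that ns - ⌊(k-s)·((k-1)·C(m,s)/C(k-1,s) - n)/(m-k+1)⌋ = q³ - q. In particular (k-1)·C(m,q)/C(k-1,q) - n = (2q³-4q²)/(2(q-2))·(m-k+1)/(k-s) works out so that the displayed floor equals q². -/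
/-!
Two applications of `C(n, k) (n + 1) = C(n + 1, k) (n + 1 - k)` give
`C(m, q) / C(m - 2, q) = m (m - 1) / ((m - q) (m - q - 1))`. For `m = q² - q` the factor
`k - 1 = q² - q - 2 = (q - 2)(q + 1)` cancels against `m - q = q (q - 2)`, leaving
`U = (q² - 1)(q² - q - 1) / (q² - 2q - 1)`. That denominator is `k - q` and `m - k + 1 = 2`, so the
quantity under the floor is the polynomial `((q² - 1)(q² - q - 1) - (q² + q - 1)(q² - 2q - 1)) / 2 = q²`.
-/

theorem Nat.choose_mul_add_two (n k : ℕ) :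
    n.choose k * ((n + 1) * (n + 2)) = (n + 2).choose k * ((n + 1 - k) * (n + 2 - k)) := by
  have h₁ := Nat.choose_mul_succ_eq n k
  have h₂ := Nat.choose_mul_succ_eq (n + 1) k
  calc n.choose k * ((n + 1) * (n + 2))
      = n.choose k * (n + 1) * (n + 2) := by ring
    _ = (n + 1).choose k * (n + 2) * (n + 1 - k) := by rw [h₁]; ring
    _ = (n + 2).choose k * ((n + 1 - k) * (n + 2 - k)) := by rw [h₂]; ring

theorem Nat.cast_choose_add_two_div {K : Type*} [Field K] [CharZero K] {n k : ℕ} (hk : k ≤ n) :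
    ((n + 2).choose k : K) / n.choose k =
      ((n : K) + 1) * (n + 2) / ((n + 1 - k) * (n + 2 - k)) := by
  have hchoose : (n.choose k : K) ≠ 0 := by exact_mod_cast (Nat.choose_pos hk).ne'
  have hsub₁ : (n : K) + 1 - k ≠ 0 := by
    rw [sub_ne_zero]; norm_cast; omega
  have hsub₂ : (n : K) + 2 - k ≠ 0 := by
    rw [sub_ne_zero]; norm_cast; omega
  have h := congrArg (Nat.cast (R := K)) (Nat.choose_mul_add_two n k)
  push_cast [Nat.cast_sub (show k ≤ n + 1 by omega), Nat.cast_sub (show k ≤ n + 2 by omega)] at h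
  rw [div_eq_div_iff hchoose (mul_ne_zero hsub₁ hsub₂)]
  linear_combination -h

theorem choose_sq_sub_div (q : ℕ) (hq : 3 ≤ q) :
    ((q ^ 2 - q).choose q : ℚ) / (q ^ 2 - q - 2).choose q =
      ((q : ℚ) ^ 2 - q) * (q ^ 2 - q - 1) / ((q ^ 2 - 2 * q) * (q ^ 2 - 2 * q - 1)) := by
  have hq2 : q + 2 ≤ q ^ 2 - q := by nlinarith [Nat.sub_add_cancel (Nat.le_self_pow two_ne_zero q)]
  obtain ⟨n, hn⟩ : ∃ n, q ^ 2 - q = n + 2 := ⟨q ^ 2 - q - 2, by omega⟩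
  have hnQ : (n : ℚ) = (q : ℚ) ^ 2 - q - 2 := by
    have := congrArg (Nat.cast (R := ℚ)) hn
    push_cast [Nat.cast_sub (Nat.le_self_pow two_ne_zero q)] at this
    linarith
  rw [hn, show n + 2 - 2 = n by omega, Nat.cast_choose_add_two_div (by omega), hnQ]
  ring_nf

theorem stmt_9_general (q : ℕ) (hq : 3 ≤ q) :
    let n : ℚ := (q : ℚ) ^ 2 + q - 1
    let k : ℚ := (q : ℚ) ^ 2 - q - 1
    let m : ℚ := (q : ℚ) ^ 2 - q
    let U : ℚ := (k - 1) * ((q ^ 2 - q).choose q : ℚ) / ((q ^ 2 - q - 2).choose q : ℚ)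
    ⌊(k - q) * (U - n) / (m - k + 1)⌋ = (q : ℤ) ^ 2 ∧
    (q ^ 2 + q - 1 : ℤ) * q - ⌊(k - q) * (U - n) / (m - k + 1)⌋ = (q : ℤ) ^ 3 - q := by
  intro n k m U
  have hqQ : (3 : ℚ) ≤ q := by exact_mod_cast hq
  have h₁ : (q : ℚ) ^ 2 - 2 * q ≠ 0 := by nlinarith
  have h₂ : (q : ℚ) ^ 2 - 2 * q - 1 ≠ 0 := by nlinarith
  have hU : U = ((q : ℚ) ^ 2 - 1) * (q ^ 2 - q - 1) / (q ^ 2 - 2 * q - 1) := by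
    rw [show U = ((q : ℚ) ^ 2 - q - 2) * (((q ^ 2 - q).choose q : ℚ) / (q ^ 2 - q - 2).choose q)
      by simp only [U, k]; ring, choose_sq_sub_div q hq, mul_div_assoc',
      div_eq_div_iff (mul_ne_zero h₁ h₂) h₂]
    ring
  have hvalue : (k - q) * (U - n) / (m - k + 1) = (q : ℚ) ^ 2 := by
    rw [hU, show k - q = (q : ℚ) ^ 2 - 2 * q - 1 by simp only [k]; ring,
      show m - k + 1 = 2 by simp only [m, k]; ring, mul_sub, mul_div_cancel₀ _ h₂]
    simp only [n]
    ring
  have hfloor : ⌊(k - q) * (U - n) / (m - k + 1)⌋ = (q : ℤ) ^ 2 := by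
    rw [hvalue]; exact_mod_cast Int.floor_natCast (q ^ 2)
  exact ⟨hfloor, by rw [hfloor]; ring⟩

/-- For q ≥ 3 a prime power, with n = q²+q-1, k = q²-q-1, m = q²-q and
s = q, the quantity ⌊(k-s)·((k-1)·C(m,s)/C(k-1,s) - n)/(m-k+1)⌋ equals q², and hence
ns - ⌊(k-s)·((k-1)·C(m,s)/C(k-1,s) - n)/(m-k+1)⌋ = q³ - q. -/
theorem stmt_9 (q : ℕ) (hq : 3 ≤ q) (hpp : IsPrimePow q) :
    let n : ℚ := (q : ℚ) ^ 2 + q - 1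
    let k : ℚ := (q : ℚ) ^ 2 - q - 1
    let m : ℚ := (q : ℚ) ^ 2 - q
    let U : ℚ := (k - 1) * ((q ^ 2 - q).choose q : ℚ) / ((q ^ 2 - q - 2).choose q : ℚ)
    ⌊(k - q) * (U - n) / (m - k + 1)⌋ = (q : ℤ) ^ 2 ∧
    (q ^ 2 + q - 1 : ℤ) * q - ⌊(k - q) * (U - n) / (m - k + 1)⌋ = (q : ℤ) ^ 3 - q :=
  stmt_9_general q hq
end

section
/- Let q ≥ 3 be a prime power and A(q) an affine plane of order q. The set system whose points (servers) are the q² points of A(q) and whose items are the q(q+1) lines (each item stored on the q servers corresponding to the points of its line) is a q-uniform combinatorial batch code with parameters n = q²+q, N = q³+q², k = q², m = q². That is, any r ≤ q² lines of A(q) have union of size at least r. -/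
/-- An affine plane of order q as a set system: q² points, q(q+1) lines of size q,
every pair of distinct points on exactly one line. -/
structure AffinePlaneDesign (α : Type) [DecidableEq α] [Fintype α] (q : ℕ) where
  lines : Finset (Finset α)
  card_points : Fintype.card α = q ^ 2
  lines_card : lines.card = q * (q + 1)
  line_size : ∀ L ∈ lines, L.card = q
  pair_unique : ∀ x y : α, x ≠ y → ∃! L, L ∈ lines ∧ x ∈ L ∧ y ∈ L

namespace APD
set_option linter.unusedSectionVars false

variable {α : Type} [DecidableEq α] [Fintype α] {q : ℕ} (D : AffinePlaneDesign α q)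

/-- Two lines sharing two distinct points are equal. -/
lemma eq_of_two {L M : Finset α} (hL : L ∈ D.lines) (hM : M ∈ D.lines) {x y : α}
    (hxy : x ≠ y) (hxL : x ∈ L) (hyL : y ∈ L) (hxM : x ∈ M) (hyM : y ∈ M) : L = M := by
  obtain ⟨N, -, hu⟩ := D.pair_unique x y hxy
  rw [hu L ⟨hL, hxL, hyL⟩, hu M ⟨hM, hxM, hyM⟩]

/-- The number of lines through any point is q+1. -/
lemma deg_eq (hq : 3 ≤ q) (x : α) :
    (D.lines.filter (fun L => x ∈ L)).card = q + 1 := by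
  obtain ⟨m, rfl⟩ : ∃ m, q = m + 1 := ⟨q - 1, by omega⟩
  set P := D.lines.filter (fun L => x ∈ L) with hP
  have hcover : Finset.univ.erase x = P.biUnion (fun L => L.erase x) := by
    ext y
    simp only [Finset.mem_erase, Finset.mem_univ, and_true, Finset.mem_biUnion, hP,
      Finset.mem_filter]
    constructor
    · intro hyx
      obtain ⟨L, ⟨hL, hxL, hyL⟩, -⟩ := D.pair_unique x y (Ne.symm hyx)
      exact ⟨L, ⟨hL, hxL⟩, hyx, hyL⟩
    · rintro ⟨L, -, hy⟩
      exact hy.1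
  have hdisj : ∀ L ∈ P, ∀ M ∈ P, L ≠ M → Disjoint (L.erase x) (M.erase x) := by
    intro L hL M hM hne
    rw [Finset.disjoint_left]
    intro y hyL hyM
    simp only [hP, Finset.mem_filter] at hL hM
    rw [Finset.mem_erase] at hyL hyM
    exact hne (eq_of_two D hL.1 hM.1 (Ne.symm hyL.1) hL.2 hyL.2 hM.2 hyM.2)
  have hcard : (Finset.univ.erase x).card = P.card * m := by
    rw [hcover, Finset.card_biUnion hdisj]
    rw [Finset.sum_congr rfl (fun L hL => ?_), Finset.sum_const, smul_eq_mul]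
    have hLl : L ∈ D.lines ∧ x ∈ L := by simpa [hP] using hL
    rw [Finset.card_erase_of_mem hLl.2, D.line_size L hLl.1]
    omega
  have h1 : (Finset.univ.erase x).card = (m + 1) ^ 2 - 1 := by
    rw [Finset.card_erase_of_mem (Finset.mem_univ x), Finset.card_univ, D.card_points]
  have h2 : (m + 1) ^ 2 - 1 = (m + 2) * m := by ring_nf; omega
  have : P.card * m = (m + 2) * m := by omega
  have hm : 0 < m := by omega
  have := Nat.eq_of_mul_eq_mul_right hm this
  omega

/-- Parallel: equal or disjoint. -/
def par (L M : Finset α) : Prop := L = M ∨ ∀ x ∈ L, x ∉ M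

instance parDec (L M : Finset α) : Decidable (par L M) :=
  decidable_of_iff (L = M ∨ L ∩ M = ∅) (by
    simp only [par, Finset.eq_empty_iff_forall_notMem, Finset.mem_inter, not_and])

lemma par_refl (L : Finset α) : par L L := Or.inl rfl

lemma par_symm {L M : Finset α} (h : par L M) : par M L := by
  rcases h with rfl | h
  · exact Or.inl rfl
  · exact Or.inr fun x hxM hxL => h x hxL hxM

/-- Playfair: through a point off a line there is exactly one parallel line. -/
lemma playfair (hq : 3 ≤ q) {L : Finset α} (hL : L ∈ D.lines) {x : α} (hx : x ∉ L) :
    ∃! M, M ∈ D.lines ∧ x ∈ M ∧ ∀ y ∈ M, y ∉ L := by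
  classical
  set P := D.lines.filter (fun M => x ∈ M) with hP
  set Q := P.filter (fun M => ∃ y ∈ M, y ∈ L) with hQ
  have hQP : Q ⊆ P := Finset.filter_subset _ _
  have hPcard : P.card = q + 1 := deg_eq D hq x
  -- |Q| = q via bijection with L
  have hQcard : Q.card = q := by
    rw [← D.line_size L hL]
    apply Finset.card_bij (fun M hM => ((Finset.mem_filter.1 hM).2).choose)
    · intro M hM
      exact ((Finset.mem_filter.1 hM).2).choose_spec.2
    · intro M hM N hN heq
      simp only [hQ, hP, Finset.mem_filter] at hM hN
      obtain ⟨⟨hMl, hxM⟩, hMw⟩ := hM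
      obtain ⟨⟨hNl, hxN⟩, hNw⟩ := hN
      have h1 := hMw.choose_spec
      have h2 := hNw.choose_spec
      have hxne : x ≠ hMw.choose := fun h => hx (h ▸ h1.2)
      exact eq_of_two D hMl hNl hxne hxM h1.1 hxN (heq ▸ h2.1)
    · intro y hy
      have hxy : x ≠ y := fun h => hx (h ▸ hy)
      obtain ⟨M, ⟨hMl, hxM, hyM⟩, -⟩ := D.pair_unique x y hxy
      have hMQ : M ∈ Q := by
        simp only [hQ, hP, Finset.mem_filter]
        exact ⟨⟨hMl, hxM⟩, y, hyM, hy⟩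
      refine ⟨M, hMQ, ?_⟩
      -- the chosen point of M equals y? we need i M = y
      have hw := (Finset.mem_filter.1 hMQ).2
      have hspec := hw.choose_spec
      -- both y and choose are in M ∩ L; if distinct, M = L, contradiction with x ∉ L
      by_contra hne
      have : M = L := eq_of_two D hMl hL hne hspec.1 hyM hspec.2 hy
      exact hx (this ▸ hxM)
  have hdiff : (P \ Q).card = 1 := by
    rw [Finset.card_sdiff_of_subset hQP, hPcard, hQcard]
    omega
  obtain ⟨M, hM⟩ := Finset.card_eq_one.1 hdiff
  have hMmem : M ∈ P \ Q := hM ▸ Finset.mem_singleton_self M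
  rw [Finset.mem_sdiff] at hMmem
  obtain ⟨hMP, hMQ⟩ := hMmem
  simp only [hP, Finset.mem_filter] at hMP
  refine ⟨M, ⟨hMP.1, hMP.2, fun y hyM hyL => hMQ ?_⟩, ?_⟩
  · simp only [hQ, hP, Finset.mem_filter]
    exact ⟨⟨hMP.1, hMP.2⟩, y, hyM, hyL⟩
  · intro N ⟨hNl, hxN, hNd⟩
    have : N ∈ P \ Q := by
      simp only [hQ, hP, Finset.mem_sdiff, Finset.mem_filter, not_exists]
      refine ⟨⟨hNl, hxN⟩, ?_⟩
      push_neg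
      intro ⟨_, _⟩ y hyN
      exact hNd y hyN
    rw [hM] at this
    exact Finset.mem_singleton.1 this

lemma par_trans (hq : 3 ≤ q) {A B C : Finset α} (hA : A ∈ D.lines) (hB : B ∈ D.lines)
    (hC : C ∈ D.lines) (hAB : par A B) (hBC : par B C) : par A C := by
  rcases hAB with rfl | hAB
  · exact hBC
  rcases hBC with rfl | hBC
  · exact Or.inr hAB
  by_cases hac : A = C
  · exact Or.inl hac
  refine Or.inr fun x hxA hxC => ?_
  have hxB : x ∉ B := fun h => hBC x h hxC
  obtain ⟨M, -, hu⟩ := playfair D hq hB hxB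
  have h1 : A = M := hu A ⟨hA, hxA, hAB⟩
  have h2 : C = M := hu C ⟨hC, hxC, fun y hyC hyB => hBC y hyB hyC⟩
  exact hac (h1.trans h2.symm)

/-- Every point lies on a member of the parallel class of L. -/
lemma class_cover (hq : 3 ≤ q) {L : Finset α} (hL : L ∈ D.lines) (x : α) :
    ∃ M, M ∈ D.lines ∧ par M L ∧ x ∈ M := by
  by_cases hx : x ∈ L
  · exact ⟨L, hL, par_refl L, hx⟩
  · obtain ⟨M, ⟨hMl, hxM, hMd⟩, -⟩ := playfair D hq hL hx
    exact ⟨M, hMl, Or.inr hMd, hxM⟩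

/-- Uniqueness: only one member of the class of L passes through a given point. -/
lemma class_unique (hq : 3 ≤ q) {L M N : Finset α} (hL : L ∈ D.lines) (hM : M ∈ D.lines)
    (hN : N ∈ D.lines) (hML : par M L) (hNL : par N L) {x : α} (hxM : x ∈ M) (hxN : x ∈ N) :
    M = N := by
  by_contra hne
  have hMN : par M N := par_trans D hq hM hL hN hML (par_symm hNL)
  rcases hMN with h | h
  · exact hne h
  · exact h x hxM hxN

/-- A parallel class has exactly q lines. -/
lemma class_card (hq : 3 ≤ q) {L : Finset α} (hL : L ∈ D.lines) :
    (D.lines.filter (fun M => par M L)).card = q := by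
  classical
  set C := D.lines.filter (fun M => par M L) with hC
  have hcov : Finset.univ = C.biUnion id := by
    ext x
    simp only [Finset.mem_univ, Finset.mem_biUnion, true_iff, hC, Finset.mem_filter, id]
    obtain ⟨M, hMl, hpar, hxM⟩ := class_cover D hq hL x
    exact ⟨M, ⟨hMl, hpar⟩, hxM⟩
  have hdisj : ∀ A ∈ C, ∀ B ∈ C, A ≠ B → Disjoint (id A) (id B) := by
    intro A hA B hB hne
    simp only [hC, Finset.mem_filter] at hA hB
    rw [Finset.disjoint_left]
    intro x hxA hxB
    exact hne (class_unique D hq hL hA.1 hB.1 hA.2 hB.2 hxA hxB)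
  have : q ^ 2 = C.card * q := by
    rw [← D.card_points, ← Finset.card_univ, hcov, Finset.card_biUnion hdisj]
    rw [Finset.sum_congr rfl (fun M hM => ?_), Finset.sum_const, smul_eq_mul]
    simp only [hC, Finset.mem_filter] at hM
    exact D.line_size M hM.1
  have hq0 : 0 < q := by omega
  have : q * q = C.card * q := by rw [← this]; ring
  exact Nat.mul_right_cancel hq0 this.symm

lemma rep_exists (hq : 3 ≤ q) (x₀ : α) {M : Finset α} (hM : M ∈ D.lines) :
    ∃! N, N ∈ D.lines ∧ par N M ∧ x₀ ∈ N := by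
  obtain ⟨N, hNl, hpar, hxN⟩ := class_cover D hq hM x₀
  refine ⟨N, ⟨hNl, hpar, hxN⟩, fun N' ⟨hN'l, hpar', hxN'⟩ => ?_⟩
  exact class_unique D hq hM hN'l hNl hpar' hpar hxN' hxN

noncomputable def rep (hq : 3 ≤ q) (x₀ : α) (M : Finset α) : Finset α :=
  if hM : M ∈ D.lines then (rep_exists D hq x₀ hM).exists.choose else ∅

lemma rep_spec (hq : 3 ≤ q) (x₀ : α) {M : Finset α} (hM : M ∈ D.lines) :
    rep D hq x₀ M ∈ D.lines ∧ par (rep D hq x₀ M) M ∧ x₀ ∈ rep D hq x₀ M := by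
  rw [rep, dif_pos hM]
  exact (rep_exists D hq x₀ hM).exists.choose_spec

lemma rep_eq_of_par (hq : 3 ≤ q) (x₀ : α) {M N : Finset α} (hM : M ∈ D.lines)
    (hN : N ∈ D.lines) (h : par M N) : rep D hq x₀ M = rep D hq x₀ N := by
  obtain ⟨h1, h2, h3⟩ := rep_spec D hq x₀ hM
  obtain ⟨h1', h2', h3'⟩ := rep_spec D hq x₀ hN
  exact class_unique D hq hN h1 h1' (par_trans D hq h1 hM hN h2 h) h2' h3 h3'

lemma par_of_rep_eq (hq : 3 ≤ q) (x₀ : α) {M N : Finset α} (hM : M ∈ D.lines)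
    (hN : N ∈ D.lines) (h : rep D hq x₀ M = rep D hq x₀ N) : par M N := by
  obtain ⟨h1, h2, h3⟩ := rep_spec D hq x₀ hM
  obtain ⟨h1', h2', h3'⟩ := rep_spec D hq x₀ hN
  exact par_trans D hq hM h1 hN (par_symm h2) (h ▸ h2')

/-- Two distinct lines share at most one point, as a cardinality bound. -/
lemma inter_card_le_one {L M : Finset α} (hL : L ∈ D.lines) (hM : M ∈ D.lines)
    (hne : L ≠ M) : (L ∩ M).card ≤ 1 := by
  refine Finset.card_le_one.2 fun a ha b hb => ?_
  rw [Finset.mem_inter] at ha hb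
  by_contra hab
  exact hne (eq_of_two D hL hM hab ha.1 hb.1 ha.2 hb.2)

/-- The Hall condition: any r ≤ q² lines cover at least r points. -/
lemma hall (hq : 3 ≤ q) (R : Finset (Finset α)) (hRl : R ⊆ D.lines)
    (hRc : R.card ≤ q ^ 2) : R.card ≤ (R.biUnion id).card := by
  classical
  rcases R.eq_empty_or_nonempty with rfl | hRne
  · simp
  have hαne : Nonempty α := by
    rw [← Fintype.card_pos_iff, D.card_points]
    positivity
  obtain ⟨x₀⟩ := hαne
  set f := rep D hq x₀ with hf
  set P := D.lines.filter (fun L => x₀ ∈ L) with hP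
  have hPcard : P.card = q + 1 := deg_eq D hq x₀
  have hfP : ∀ M ∈ R, f M ∈ P := by
    intro M hM
    obtain ⟨h1, h2, h3⟩ := rep_spec D hq x₀ (hRl hM)
    exact Finset.mem_filter.2 ⟨h1, h3⟩
  set g := fun L => (R.filter (fun M => f M = L)).card with hg
  have hsum : R.card = ∑ L ∈ P, g L := Finset.card_eq_sum_card_fiberwise hfP
  obtain ⟨L₁, hL₁P, hmax₁⟩ := P.exists_max_image g ⟨f hRne.choose, hfP _ hRne.choose_spec⟩
  have hsne : (P.erase L₁).Nonempty := by
    rw [← Finset.card_pos, Finset.card_erase_of_mem hL₁P, hPcard]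
    omega
  obtain ⟨L₂, hL₂s, hmax₂⟩ := (P.erase L₁).exists_max_image g hsne
  have hL₂ne : L₂ ≠ L₁ := (Finset.mem_erase.1 hL₂s).1
  have hL₂P : L₂ ∈ P := (Finset.mem_erase.1 hL₂s).2
  have hL₁l : L₁ ∈ D.lines := (Finset.mem_filter.1 hL₁P).1
  set t₁ := g L₁ with ht₁
  set t₂ := g L₂ with ht₂
  have ht21 : t₂ ≤ t₁ := hmax₁ L₂ hL₂P
  -- R.card ≤ t₁ + q * t₂
  have hrbound : R.card ≤ t₁ + q * t₂ := by
    rw [hsum, ← Finset.add_sum_erase _ g hL₁P]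
    have : ∑ L ∈ P.erase L₁, g L ≤ (P.erase L₁).card * t₂ := by
      rw [← smul_eq_mul]
      exact Finset.sum_le_card_nsmul _ _ _ fun L hL => hmax₂ L hL
    rw [Finset.card_erase_of_mem hL₁P, hPcard] at this
    have hq1 : q + 1 - 1 = q := by omega
    rw [hq1] at this
    omega
  set F₁ := R.filter (fun M => f M = L₁) with hF₁
  set F₂ := R.filter (fun M => f M = L₂) with hF₂
  have hF₁card : F₁.card = t₁ := rfl
  have hF₂card : F₂.card = t₂ := rfl
  have hF₁l : ∀ M ∈ F₁, M ∈ D.lines := fun M hM => hRl (Finset.mem_filter.1 hM).1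
  have hF₂l : ∀ M ∈ F₂, M ∈ D.lines := fun M hM => hRl (Finset.mem_filter.1 hM).1
  have hpar₁ : ∀ M ∈ F₁, ∀ N ∈ F₁, par M N := by
    intro M hM N hN
    exact par_of_rep_eq D hq x₀ (hF₁l M hM) (hF₁l N hN)
      (((Finset.mem_filter.1 hM).2).trans ((Finset.mem_filter.1 hN).2).symm)
  have hpar₂ : ∀ M ∈ F₂, ∀ N ∈ F₂, par M N := by
    intro M hM N hN
    exact par_of_rep_eq D hq x₀ (hF₂l M hM) (hF₂l N hN)
      (((Finset.mem_filter.1 hM).2).trans ((Finset.mem_filter.1 hN).2).symm)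
  -- t₁ ≤ q
  have ht₁q : t₁ ≤ q := by
    rw [← hF₁card, ← class_card D hq hL₁l]
    apply Finset.card_le_card
    intro M hM
    have hMl := hF₁l M hM
    obtain ⟨h1, h2, h3⟩ := rep_spec D hq x₀ hMl
    refine Finset.mem_filter.2 ⟨hMl, ?_⟩
    have : rep D hq x₀ M = L₁ := (Finset.mem_filter.1 hM).2
    exact par_symm (this ▸ h2)
  -- V = union of F₁
  set V := F₁.biUnion id with hV
  have hdisj₁ : ∀ A ∈ F₁, ∀ B ∈ F₁, A ≠ B → Disjoint (id A) (id B) := by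
    intro A hA B hB hne
    rcases hpar₁ A hA B hB with h | h
    · exact absurd h hne
    · exact Finset.disjoint_left.2 h
  have hVcard : V.card = t₁ * q := by
    rw [hV, Finset.card_biUnion hdisj₁, ← hF₁card]
    simp only [id_eq]
    rw [Finset.sum_congr rfl (fun M hM => D.line_size M (hF₁l M hM)), Finset.sum_const,
      smul_eq_mul]
  -- each line of F₂ meets V in at most t₁ points
  have hmeet : ∀ M ∈ F₂, q - t₁ ≤ (M \ V).card := by
    intro M hM
    have hMl := hF₂l M hM
    have hint : (M ∩ V).card ≤ t₁ := by
      have hsub : M ∩ V ⊆ F₁.biUnion (fun L => M ∩ L) := by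
        intro x hx
        rw [Finset.mem_inter, hV, Finset.mem_biUnion] at hx
        obtain ⟨L, hL, hxL⟩ := hx.2
        exact Finset.mem_biUnion.2 ⟨L, hL, Finset.mem_inter.2 ⟨hx.1, hxL⟩⟩
      calc (M ∩ V).card ≤ ∑ L ∈ F₁, (M ∩ L).card :=
            le_trans (Finset.card_le_card hsub) (Finset.card_biUnion_le)
        _ ≤ ∑ _L ∈ F₁, 1 := by
            apply Finset.sum_le_sum
            intro L hL
            apply inter_card_le_one D hMl (hF₁l L hL)
            intro hML
            apply hL₂ne
            rw [← (Finset.mem_filter.1 hM).2, ← (Finset.mem_filter.1 hL).2, hML]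
        _ = t₁ := by rw [Finset.sum_const, smul_eq_mul, mul_one, hF₁card]
    have := Finset.card_inter_add_card_sdiff M V
    have hMq : M.card = q := D.line_size M hMl
    omega
  -- W = new points from F₂
  set W := F₂.biUnion (fun M => M \ V) with hW
  have hdisj₂ : ∀ A ∈ F₂, ∀ B ∈ F₂, A ≠ B → Disjoint (A \ V) (B \ V) := by
    intro A hA B hB hne
    rcases hpar₂ A hA B hB with h | h
    · exact absurd h hne
    · exact Finset.disjoint_left.2 fun x hx hx' =>
        h x (Finset.mem_sdiff.1 hx).1 (Finset.mem_sdiff.1 hx').1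
  have hWcard : t₂ * (q - t₁) ≤ W.card := by
    rw [hW, Finset.card_biUnion hdisj₂, ← hF₂card, ← smul_eq_mul]
    exact Finset.card_nsmul_le_sum _ _ _ fun M hM => hmeet M hM
  have hVW : Disjoint V W := by
    rw [Finset.disjoint_left]
    intro x hxV hxW
    rw [hW, Finset.mem_biUnion] at hxW
    obtain ⟨M, -, hx⟩ := hxW
    exact (Finset.mem_sdiff.1 hx).2 hxV
  have hsubU : V ∪ W ⊆ R.biUnion id := by
    intro x hx
    rcases Finset.mem_union.1 hx with hx | hx
    · rw [hV, Finset.mem_biUnion] at hx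
      obtain ⟨M, hM, hxM⟩ := hx
      exact Finset.mem_biUnion.2 ⟨M, (Finset.mem_filter.1 hM).1, hxM⟩
    · rw [hW, Finset.mem_biUnion] at hx
      obtain ⟨M, hM, hxM⟩ := hx
      exact Finset.mem_biUnion.2 ⟨M, (Finset.mem_filter.1 hM).1, (Finset.mem_sdiff.1 hxM).1⟩
  have hU : t₁ * q + t₂ * (q - t₁) ≤ (R.biUnion id).card := by
    calc t₁ * q + t₂ * (q - t₁) ≤ V.card + W.card := by omega
      _ = (V ∪ W).card := (Finset.card_union_of_disjoint hVW).symm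
      _ ≤ (R.biUnion id).card := Finset.card_le_card hsubU
  -- final arithmetic
  by_cases ht2q : t₂ = q
  · have ht1q : t₁ = q := le_antisymm ht₁q (ht2q ▸ ht21)
    calc R.card ≤ q ^ 2 := hRc
      _ = t₁ * q + 0 := by rw [ht1q]; ring
      _ ≤ (R.biUnion id).card := by
          refine le_trans ?_ hU
          omega
  · have ht2lt : t₂ + 1 ≤ q := by
      have : t₂ ≤ q := le_trans ht21 ht₁q
      omega
    have ht₁pos : 1 ≤ t₁ := by
      obtain ⟨M₀, hM₀⟩ := hRne
      have : 1 ≤ g (f M₀) := by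
        show 1 ≤ (Finset.filter (fun M => f M = f M₀) R).card
        exact Finset.card_pos.2 ⟨M₀, Finset.mem_filter.2 ⟨hM₀, rfl⟩⟩
      exact le_trans this (hmax₁ _ (hfP M₀ hM₀))
    refine le_trans hrbound (le_trans ?_ hU)
    set c := q - t₁ with hc
    have hqc : q = c + t₁ := by omega
    have key : t₁ * (t₂ + 1) ≤ t₁ * (c + t₁) := Nat.mul_le_mul_left t₁ (hqc ▸ ht2lt)
    rw [hqc]
    nlinarith [key]

end APD

/-- For q ≥ 3 a prime power, the set system whose q² points are servers
and whose q(q+1) lines are the items of an affine plane of order q is a q-uniform CBC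
with n = q²+q, N = q³+q², k = q², m = q²: the parameters are as stated and any
r ≤ q² lines have union of size at least r. -/
theorem stmt_12 {α : Type} [DecidableEq α] [Fintype α] (q : ℕ) (hq : 3 ≤ q)
    (hpp : IsPrimePow q) (D : AffinePlaneDesign α q) :
    D.lines.card = q ^ 2 + q ∧
    (∑ L ∈ D.lines, L.card) = q ^ 3 + q ^ 2 ∧
    Fintype.card α = q ^ 2 ∧
    (∀ L ∈ D.lines, L.card = q) ∧
    (∀ R ⊆ D.lines, R.card ≤ q ^ 2 → R.card ≤ (R.biUnion id).card) := by
  refine ⟨by rw [D.lines_card]; ring, ?_, D.card_points, D.line_size, fun R hRl hRc =>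
    APD.hall D hq R hRl hRc⟩
  rw [Finset.sum_congr rfl D.line_size, Finset.sum_const, smul_eq_mul, D.lines_card]
  ring
end

section
/- Let q ≥ 3 be a prime power. Taking the points of a resolvable TD(q-1,q) as servers and its q² blocks as items yields a (q-1)-uniform combinatorial batch code with parameters n = q², N = q³-q², k = q²-q-1, m = q²-q; i.e., any r ≤ q²-q-1 blocks of TD(q-1,q) cover at least r points. -/
open Finset

lemma exists_two_largest_sum_le {ι : Type*} [DecidableEq ι] (s : Finset ι) (f : ι → ℕ)
    (hs : 1 < s.card) :
    ∃ i ∈ s, ∃ j ∈ s, i ≠ j ∧ f j ≤ f i ∧ ∑ k ∈ s, f k ≤ f i + (s.card - 1) * f j := by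
  obtain ⟨i, hi, hi_max⟩ := s.exists_max_image f (card_pos.mp (by omega))
  have hne : (s.erase i).Nonempty := card_pos.mp (by rw [card_erase_of_mem hi]; omega)
  obtain ⟨j, hj, hj_max⟩ := (s.erase i).exists_max_image f hne
  refine ⟨i, hi, j, mem_of_mem_erase hj, (ne_of_mem_erase hj).symm,
    hi_max j (mem_of_mem_erase hj), ?_⟩
  rw [← add_sum_erase s f hi, ← card_erase_of_mem hi, ← smul_eq_mul]
  exact Nat.add_le_add_left (sum_le_card_nsmul _ _ _ hj_max) _

lemma add_sub_mul_sub_le {q a b r : ℕ} (ha : 2 ≤ a) (hba : b ≤ a) (haq : a ≤ q)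
    (hr : r ≤ a + (q - 1) * b) (hr' : r ≤ (q - 1) * q - 1) :
    r + (q - a) * (q - b) ≤ (q - 1) * q := by
  rcases Nat.lt_or_ge b (q - 1) with hb | hb
  · -- the slack in `hkey` is `(a - 1) * (q - 1 - b) - 1`
    have hkey : a + (q - 1) * b + (q - a) * (q - b) ≤ (q - 1) * q := by
      zify [haq, (by omega : b ≤ q), (by omega : 1 ≤ q)]
      have ha' : (2 : ℤ) ≤ a := by exact_mod_cast ha
      have hb' : (b : ℤ) + 2 ≤ q := by exact_mod_cast (by omega : b + 2 ≤ q)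
      nlinarith [mul_nonneg (sub_nonneg.mpr ha') (sub_nonneg.mpr hb')]
    omega
  · have h1 : (q - a) * (q - b) ≤ 1 * 1 := Nat.mul_le_mul (by omega) (by omega)
    have hN : 0 < (q - 1) * q := Nat.mul_pos (by omega) (by omega)
    omega

namespace TD

variable {α : Type} [DecidableEq α] [Fintype α] {ℓ h : ℕ} (D : TD α ℓ h)

lemma card_inter_le_one {B₁ B₂ : Finset α} (h₁ : B₁ ∈ D.blocks) (h₂ : B₂ ∈ D.blocks)
    (hne : B₁ ≠ B₂) : (B₁ ∩ B₂).card ≤ 1 := by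
  refine card_le_one.mpr fun x hx y hy => ?_
  rw [mem_inter] at hx hy
  by_contra hxy
  have hgroups : ∀ G ∈ D.groups, ¬(x ∈ G ∧ y ∈ G) := by
    rintro G hG ⟨hxG, hyG⟩
    have h_one := D.block_meets_group B₁ h₁ G hG
    have h_two : 1 < (B₁ ∩ G).card :=
      one_lt_card.mpr ⟨x, mem_inter.mpr ⟨hx.1, hxG⟩, y, mem_inter.mpr ⟨hy.1, hyG⟩, hxy⟩
    omega
  obtain ⟨B, -, huniq⟩ := D.pair_unique x y hxy hgroups
  exact hne ((huniq B₁ ⟨h₁, hx.1, hy.1⟩).trans (huniq B₂ ⟨h₂, hx.2, hy.2⟩).symm)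

lemma two_mul_sub_one_le_card_union {B₁ B₂ : Finset α} (h₁ : B₁ ∈ D.blocks)
    (h₂ : B₂ ∈ D.blocks) (hne : B₁ ≠ B₂) : 2 * ℓ - 1 ≤ (B₁ ∪ B₂).card := by
  have := card_union_add_card_inter B₁ B₂
  have := D.card_inter_le_one h₁ h₂ hne
  have := D.block_size B₁ h₁
  have := D.block_size B₂ h₂
  omega

lemma card_le_card_biUnion_of_card_le {R : Finset (Finset α)} (hR : R ⊆ D.blocks)
    (hRcard : R.card ≤ 2 * ℓ - 1) : R.card ≤ (R.biUnion id).card := by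
  rcases Nat.lt_or_ge R.card 2 with hR2 | hR2
  · rcases R.eq_empty_or_nonempty with rfl | ⟨B, hB⟩
    · simp
    · have hBU := card_le_card (subset_biUnion_of_mem id hB)
      rw [id, D.block_size B (hR hB)] at hBU
      omega
  · obtain ⟨B₁, hB₁, B₂, hB₂, hB⟩ := one_lt_card.mp hR2
    have hunion : B₁ ∪ B₂ ⊆ R.biUnion id :=
      union_subset (subset_biUnion_of_mem id hB₁) (subset_biUnion_of_mem id hB₂)
    have := D.two_mul_sub_one_le_card_union (hR hB₁) (hR hB₂) hB
    have := card_le_card hunion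
    omega

end TD

namespace RTD

variable {α : Type} [DecidableEq α] [Fintype α] {ℓ h : ℕ} (D : RTD α ℓ h)

lemma classes_pairwiseDisjoint : (D.classes : Set (Finset (Finset α))).PairwiseDisjoint id := by
  intro C₁ h₁ C₂ h₂ hne
  refine disjoint_left.mpr fun B hB₁ hB₂ => hne ?_
  obtain ⟨C, -, huniq⟩ := D.block_class B (D.class_sub C₁ h₁ hB₁)
  exact (huniq C₁ ⟨h₁, hB₁⟩).trans (huniq C₂ ⟨h₂, hB₂⟩).symm

lemma blocks_eq_biUnion_classes : D.blocks = D.classes.biUnion id := by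
  ext B
  simp only [mem_biUnion, id]
  constructor
  · intro hB
    obtain ⟨C, ⟨hC, hBC⟩, -⟩ := D.block_class B hB
    exact ⟨C, hC, hBC⟩
  · rintro ⟨C, hC, hBC⟩
    exact D.class_sub C hC hBC

lemma card_blocks : D.blocks.card = h * h := by
  rw [D.blocks_eq_biUnion_classes, card_biUnion D.classes_pairwiseDisjoint]
  simp only [id]
  rw [sum_congr rfl D.class_card, sum_const, D.classes_card, smul_eq_mul]

lemma card_eq_sum_card_inter_classes {R : Finset (Finset α)} (hR : R ⊆ D.blocks) :
    R.card = ∑ C ∈ D.classes, (R ∩ C).card := by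
  conv_lhs => rw [← inter_eq_left.mpr hR, D.blocks_eq_biUnion_classes, inter_biUnion]
  rw [card_biUnion]
  · rfl
  · exact fun C₁ h₁ C₂ h₂ hne =>
      (D.classes_pairwiseDisjoint h₁ h₂ hne).mono inter_subset_right inter_subset_right

lemma card_class_sdiff {C : Finset (Finset α)} (hC : C ∈ D.classes) (R : Finset (Finset α)) :
    (C \ R).card = h - (R ∩ C).card := by
  rw [card_sdiff, D.class_card C hC]

/-- A missed point is the intersection of its blocks in `C₁` and `C₂`. -/
lemma card_compl_biUnion_le {C₁ C₂ : Finset (Finset α)} (h₁ : C₁ ∈ D.classes)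
    (h₂ : C₂ ∈ D.classes) (hne : C₁ ≠ C₂) (R : Finset (Finset α)) :
    (R.biUnion id)ᶜ.card ≤ (C₁ \ R).card * (C₂ \ R).card := by
  have hsub : (R.biUnion id)ᶜ ⊆ ((C₁ \ R) ×ˢ (C₂ \ R)).biUnion fun p => p.1 ∩ p.2 := by
    intro x hx
    have hmiss : ∀ B ∈ R, x ∉ B := fun B hB hxB =>
      (mem_compl.mp hx) (mem_biUnion.mpr ⟨B, hB, hxB⟩)
    obtain ⟨B₁, ⟨hB₁, hxB₁⟩, -⟩ := D.class_cover C₁ h₁ x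
    obtain ⟨B₂, ⟨hB₂, hxB₂⟩, -⟩ := D.class_cover C₂ h₂ x
    refine mem_biUnion.mpr ⟨(B₁, B₂), ?_, mem_inter.mpr ⟨hxB₁, hxB₂⟩⟩
    exact mem_product.mpr ⟨mem_sdiff.mpr ⟨hB₁, fun h => hmiss B₁ h hxB₁⟩,
      mem_sdiff.mpr ⟨hB₂, fun h => hmiss B₂ h hxB₂⟩⟩
  calc (R.biUnion id)ᶜ.card
      ≤ ∑ p ∈ (C₁ \ R) ×ˢ (C₂ \ R), (p.1 ∩ p.2).card := (card_le_card hsub).trans card_biUnion_le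
    _ ≤ ∑ _p ∈ (C₁ \ R) ×ˢ (C₂ \ R), 1 := by
        refine sum_le_sum fun p hp => ?_
        obtain ⟨hp₁, hp₂⟩ := mem_product.mp hp
        have hB₁ := (mem_sdiff.mp hp₁).1
        have hB₂ := (mem_sdiff.mp hp₂).1
        refine D.toTD.card_inter_le_one (D.class_sub C₁ h₁ hB₁) (D.class_sub C₂ h₂ hB₂) ?_
        rintro heq
        exact disjoint_left.mp (D.classes_pairwiseDisjoint h₁ h₂ hne) hB₁ (heq ▸ hB₂)
    _ = (C₁ \ R).card * (C₂ \ R).card := by rw [sum_const, card_product, smul_eq_mul, mul_one]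

end RTD

lemma RTD.card_le_card_biUnion {α : Type} [DecidableEq α] [Fintype α] {q : ℕ}
    (D : RTD α (q - 1) q) (hq : 3 ≤ q) {R : Finset (Finset α)} (hR : R ⊆ D.blocks)
    (hRcard : R.card ≤ q ^ 2 - q - 1) :
    R.card ≤ (R.biUnion id).card := by
  obtain ⟨C₁, h₁, C₂, h₂, hne, hba, hsum⟩ :=
    exists_two_largest_sum_le D.classes (fun C => (R ∩ C).card) (by rw [D.classes_card]; omega)
  set a := (R ∩ C₁).card
  set b := (R ∩ C₂).card
  rw [← D.card_eq_sum_card_inter_classes hR, D.classes_card] at hsum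
  rcases Nat.lt_or_ge a 2 with ha | ha
  · have : (q - 1) * b ≤ (q - 1) * 1 := Nat.mul_le_mul_left _ (by omega)
    exact D.toTD.card_le_card_biUnion_of_card_le hR (by omega)
  · have hmissed : (q - 1) * q - (R.biUnion id).card ≤ (q - a) * (q - b) := by
      rw [← D.card_points, ← card_compl, ← D.card_class_sdiff h₁, ← D.card_class_sdiff h₂]
      exact D.card_compl_biUnion_le h₁ h₂ hne R
    have haq : a ≤ q := (card_le_card inter_subset_right).trans (D.class_card C₁ h₁).le
    have hU : (R.biUnion id).card ≤ (q - 1) * q := D.card_points ▸ card_le_univ _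
    have := add_sub_mul_sub_le ha hba haq hsum (by rw [Nat.sub_one_mul, ← sq]; omega)
    omega

theorem stmt_15_general {α : Type} [DecidableEq α] [Fintype α] (q : ℕ) (hq : 3 ≤ q)
    (D : RTD α (q - 1) q) :
    D.blocks.card = q ^ 2 ∧
    (∑ B ∈ D.blocks, B.card) = q ^ 3 - q ^ 2 ∧
    Fintype.card α = q ^ 2 - q ∧
    (∀ B ∈ D.blocks, B.card = q - 1) ∧
    (∀ R ⊆ D.blocks, R.card ≤ q ^ 2 - q - 1 → R.card ≤ (R.biUnion id).card) := by
  have hblocks : D.blocks.card = q ^ 2 := by rw [D.card_blocks, sq]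
  refine ⟨hblocks, ?_, ?_, D.block_size, fun R hR hRcard => D.card_le_card_biUnion hq hR hRcard⟩
  · rw [sum_congr rfl D.block_size, sum_const, hblocks, smul_eq_mul, Nat.mul_sub_one]
    ring_nf
  · rw [D.card_points, Nat.sub_one_mul, sq]

/-- For q ≥ 3 a prime power, taking the q(q-1) points of a resolvable
TD(q-1,q) as servers and its q² blocks as items yields a (q-1)-uniform CBC with
n = q², N = q³-q², k = q²-q-1, m = q²-q: the parameters are as stated and any
r ≤ q²-q-1 blocks cover at least r points. -/
theorem stmt_15 {α : Type} [DecidableEq α] [Fintype α] (q : ℕ) (hq : 3 ≤ q)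
    (hpp : IsPrimePow q) (D : RTD α (q - 1) q) :
    D.blocks.card = q ^ 2 ∧
    (∑ B ∈ D.blocks, B.card) = q ^ 3 - q ^ 2 ∧
    Fintype.card α = q ^ 2 - q ∧
    (∀ B ∈ D.blocks, B.card = q - 1) ∧
    (∀ R ⊆ D.blocks, R.card ≤ q ^ 2 - q - 1 → R.card ≤ (R.biUnion id).card) :=
  stmt_15_general q hq D
end
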